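/- arXiv:1703.05839 — 4 statements merged into one kernel-verified Lean document; each statement's English description precedes it below -/
import Mathlib

section
/- (Anti-concentration for non-flat vectors, Lemma 3.3.) Let 1 ≤ m ≤ n, ρ ∈ (0,1), and let u ∈ ℂⁿ be a unit vector with u ∉ Flat(m,ρ). Then Q_u(ρ) < 1 − m/n. -/
open scoped BigOperators

noncomputable section

/-- The coordinates of a vector in `EuclideanSpace ℂ (Fin n)`. -/
def coords {n : ℕ} (v : EuclideanSpace ℂ (Fin n)) : Fin n → ℂ :=
  WithLp.equiv 2 (Fin n → ℂ) v

/-- `Sparse(m)`: vectors in `ℂⁿ` with at most `m` nonzero coordinates. -/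
def sparseVecs (n m : ℕ) : Set (EuclideanSpace ℂ (Fin n)) :=
  {v | ({j | coords v j ≠ 0} : Set (Fin n)).ncard ≤ m}

/-- The all-ones vector `𝟙 ∈ ℂⁿ`. -/
def onesE (n : ℕ) : EuclideanSpace ℂ (Fin n) :=
  (WithLp.equiv 2 (Fin n → ℂ)).symm (fun _ => 1)

/-- `Flat(m, ρ)`: unit vectors within distance `ρ` of `Sparse(m) + ℂ·𝟙`. -/
def flatVecs (n m : ℕ) (ρ : ℝ) : Set (EuclideanSpace ℂ (Fin n)) :=
  {u | ‖u‖ = 1 ∧ ∃ v ∈ sparseVecs n m, ∃ lam : ℂ, ‖u - v - lam • onesE n‖ ≤ ρ}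

/-- The concentration function
`Q_v(ρ) = sup_{λ ∈ ℂ} (1/n) #{j : |v_j - λ/√n| < ρ/√n}`. -/
def concFn {n : ℕ} (v : EuclideanSpace ℂ (Fin n)) (ρ : ℝ) : ℝ :=
  ⨆ lam : ℂ,
    (({j | ‖coords v j - lam / (Real.sqrt n : ℂ)‖ < ρ / Real.sqrt n} :
        Set (Fin n)).ncard : ℝ) / n

lemma flat_of_count (n m : ℕ) (hn : 0 < n) (ρ : ℝ) (hρ0 : 0 ≤ ρ)
    (u : EuclideanSpace ℂ (Fin n)) (hu : ‖u‖ = 1) (lam : ℂ)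
    (h : n ≤ ({j | ‖coords u j - lam / (Real.sqrt n : ℂ)‖ < ρ / Real.sqrt n} :
        Set (Fin n)).ncard + m) :
    u ∈ flatVecs n m ρ := by
  classical
  set c : ℂ := lam / (Real.sqrt n : ℂ) with hc
  set S : Set (Fin n) := {j | ‖coords u j - c‖ < ρ / Real.sqrt n} with hS
  set v : EuclideanSpace ℂ (Fin n) :=
    (WithLp.equiv 2 (Fin n → ℂ)).symm (fun j => if j ∈ S then 0 else coords u j - c) with hv
  have hcompl : S.ncard + Sᶜ.ncard = n := by
    simpa using Set.ncard_add_ncard_compl S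
  refine ⟨hu, v, ?_, c, ?_⟩
  · have hsub : {j | coords v j ≠ 0} ⊆ Sᶜ := by
      intro j hj
      simp only [Set.mem_setOf_eq, coords, hv, Equiv.apply_symm_apply] at hj
      by_contra hjS
      simp only [Set.mem_compl_iff, not_not] at hjS
      exact hj (by simp [hjS])
    have hle := Set.ncard_le_ncard hsub (Set.toFinite _)
    simp only [sparseVecs, Set.mem_setOf_eq]
    omega
  · have hnpos : (0:ℝ) < Real.sqrt n := Real.sqrt_pos.mpr (by exact_mod_cast hn)
    have hw : ∀ j, coords (u - v - c • onesE n) j = if j ∈ S then coords u j - c else 0 := by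
      intro j
      simp only [coords, hv, onesE, WithLp.equiv_apply, WithLp.ofLp_sub, WithLp.ofLp_smul, WithLp.equiv_symm_apply, WithLp.ofLp_toLp, Pi.sub_apply,
        Pi.smul_apply, Equiv.apply_symm_apply, smul_eq_mul, mul_one]
      by_cases hj : j ∈ S <;> simp [hj]
    have hnorm : ‖u - v - c • onesE n‖ = Real.sqrt (∑ j, ‖coords (u - v - c • onesE n) j‖ ^ 2) :=
      EuclideanSpace.norm_eq _
    rw [hnorm]
    have hterm : ∀ j, ‖coords (u - v - c • onesE n) j‖ ^ 2 ≤ (ρ / Real.sqrt n) ^ 2 := by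
      intro j
      rw [hw j]
      by_cases hj : j ∈ S
      · simp only [hj, if_true]
        have h1 : ‖coords u j - c‖ < ρ / Real.sqrt n := hj
        have := pow_le_pow_left₀ (norm_nonneg _) h1.le 2
        simpa using this
      · have : (0:ℝ) ≤ (ρ / Real.sqrt n) ^ 2 := sq_nonneg _
        simpa [hj] using this
    have hsum : (∑ j, ‖coords (u - v - c • onesE n) j‖ ^ 2) ≤ ρ ^ 2 := by
      calc (∑ j, ‖coords (u - v - c • onesE n) j‖ ^ 2)
          ≤ ∑ _j : Fin n, (ρ / Real.sqrt n) ^ 2 := Finset.sum_le_sum fun j _ => hterm j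
        _ = n * (ρ / Real.sqrt n) ^ 2 := by simp [Finset.sum_const, mul_comm]
        _ = ρ ^ 2 := by
            rw [div_pow, Real.sq_sqrt (by positivity : (0:ℝ) ≤ (n:ℝ))]
            field_simp
    calc Real.sqrt (∑ j, ‖coords (u - v - c • onesE n) j‖ ^ 2)
        ≤ Real.sqrt (ρ ^ 2) := Real.sqrt_le_sqrt hsum
      _ = ρ := Real.sqrt_sq hρ0

/-- **Anti-concentration for non-flat vectors** (Lemma 3.3): if `u` is a unit vector with
`u ∉ Flat(m, ρ)`, then `Q_u(ρ) < 1 - m/n`. -/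
theorem nonflat_anticoncentration (n m : ℕ) (hm1 : 1 ≤ m) (hmn : m ≤ n)
    (ρ : ℝ) (hρ : ρ ∈ Set.Ioo (0 : ℝ) 1)
    (u : EuclideanSpace ℂ (Fin n)) (hu : ‖u‖ = 1) (hflat : u ∉ flatVecs n m ρ) :
    concFn u ρ < 1 - (m : ℝ) / n := by
  have hn : 0 < n := lt_of_lt_of_le hm1 hmn
  have key : ∀ lam : ℂ,
      ({j | ‖coords u j - lam / (Real.sqrt n : ℂ)‖ < ρ / Real.sqrt n} :
        Set (Fin n)).ncard + m < n := by
    intro lam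
    by_contra h
    push_neg at h
    exact hflat (flat_of_count n m hn ρ hρ.1.le u hu lam h)
  have hmlt : m < n := by have := key 0; omega
  have hbound : concFn u ρ ≤ ((n - m - 1 : ℕ) : ℝ) / n := by
    apply ciSup_le
    intro lam
    have := key lam
    gcongr
    exact_mod_cast by omega
  refine lt_of_le_of_lt hbound ?_
  have h1 : ((n - m - 1 : ℕ) : ℝ) < ((n - m : ℕ) : ℝ) := by
    exact_mod_cast by omega
  have h2 : ((n - m : ℕ) : ℝ) / n = 1 - (m:ℝ)/n := by
    rw [Nat.cast_sub hmn]
    field_simp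
  rw [← h2]
  gcongr

end
end

section
/- (Existence of a large bimodal component, Lemma 3.4.) There is an absolute constant c > 0 such that: for every unit vector u ∈ ℂⁿ with u ∉ Flat(m,ρ), there exist disjoint sets J₁, J₂ ⊆ [n] with |J₁| ≥ m and |J₂| ≥ c(n−m) such that |u_{j₁} − u_{j₂}| ≥ ρ/(2√n) for all j₁ ∈ J₁, j₂ ∈ J₂. Moreover, there is a set J₁′ ⊆ J₁ with |J₁′| ≥ cm such that for every integer 1 ≤ r ≤ min(|J₁′|, |J₂|) and all subsets J₁″ ⊆ J₁′ and J₂″ ⊆ J₂ of size r, |(1/r)Σ_{j∈J₁″} u_j − (1/r)Σ_{j∈J₂″} u_j| ≥ ρ/(4√n). -/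
open scoped BigOperators
open Finset

noncomputable section

private def dirE : Fin 8 → ℂ :=
  ![1, -1, Complex.I, -Complex.I, ⟨3/5, 4/5⟩, ⟨-(3/5), -(4/5)⟩, ⟨3/5, -(4/5)⟩, ⟨-(3/5), 4/5⟩]

private lemma dirE_re_im : ∀ t : Fin 8, (dirE t).re ^ 2 + (dirE t).im ^ 2 = 1 := by
  intro t
  fin_cases t <;> norm_num [dirE, Complex.I_re, Complex.I_im]

private lemma dirE_abs (t : Fin 8) : ‖dirE t‖ = 1 := by
  rw [Complex.norm_def, Complex.normSq_apply, show (dirE t).re * (dirE t).re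
    + (dirE t).im * (dirE t).im = 1 by have := dirE_re_im t; nlinarith, Real.sqrt_one]

set_option maxHeartbeats 1000000 in
private lemma dirE_cover (w : ℂ) :
    ∃ t : Fin 8, (3/4) * ‖w‖ ≤ ((starRingEnd ℂ) (dirE t) * w).re := by
  by_contra hcon
  push_neg at hcon
  have key : ∀ t : Fin 8, (dirE t).re * w.re + (dirE t).im * w.im < 3/4 * ‖w‖ := by
    intro t
    have h := hcon t
    rwa [Complex.mul_re, Complex.conj_re, Complex.conj_im, neg_mul, sub_neg_eq_add] at h
  have h0 := key 0
  have h1 := key 1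
  have h2 := key 2
  have h3 := key 3
  have h4 := key 4
  have h5 := key 5
  have h6 := key 6
  have h7 := key 7
  rw [show dirE 0 = 1 from rfl] at h0
  rw [show dirE 1 = -1 from rfl] at h1
  rw [show dirE 2 = Complex.I from rfl] at h2
  rw [show dirE 3 = -Complex.I from rfl] at h3
  rw [show dirE 4 = ⟨3/5, 4/5⟩ from rfl] at h4
  rw [show dirE 5 = ⟨-(3/5), -(4/5)⟩ from rfl] at h5
  rw [show dirE 6 = ⟨3/5, -(4/5)⟩ from rfl] at h6
  rw [show dirE 7 = ⟨-(3/5), 4/5⟩ from rfl] at h7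
  simp only [Complex.one_re, Complex.one_im, Complex.neg_re, Complex.neg_im,
    Complex.I_re, Complex.I_im] at h0 h1 h2 h3 h4 h5 h6 h7
  set x := w.re
  set y := w.im
  set r := ‖w‖ with hr
  have hr0 : 0 ≤ r := norm_nonneg w
  have hr2 : x^2 + y^2 = r^2 := by
    rw [hr, Complex.sq_norm, Complex.normSq_apply]; ring
  norm_num at h0 h1 h2 h3 h4 h5 h6 h7
  have hx2 : x^2 ≤ (9/16)*r^2 := by nlinarith
  have hy2 : y^2 ≤ (9/16)*r^2 := by nlinarith
  have hx2' : (7/16)*r^2 ≤ x^2 := by nlinarith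
  have hy2' : (7/16)*r^2 ≤ y^2 := by nlinarith
  have hxy : x*y ≤ (25/192)*r^2 := by nlinarith
  have hxy' : -((25/192)*r^2) ≤ x*y := by nlinarith
  have hxysq : (x*y)^2 ≤ (25/192)^2*r^4 := by nlinarith [hxy, hxy']
  have hprod : (49/256)*r^4 ≤ x^2*y^2 := by
    nlinarith [mul_le_mul hx2' hy2' (by positivity) (by nlinarith : (0:ℝ) ≤ x^2)]
  have hr4 : r^4 ≤ 0 := by nlinarith
  have hrz : r = 0 := by nlinarith [pow_pos (lt_of_le_of_ne hr0 (by intro h; exact absurd h.symm (by nlinarith))) 4]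
  have hxz : x = 0 := by nlinarith
  rw [hrz, hxz] at h0
  norm_num at h0

set_option maxHeartbeats 4000000 in
/-- **Existence of a large bimodal component** (Lemma 3.4): if `u` is a unit vector with
`u ∉ Flat(m, ρ)`, then there are disjoint sets `J₁, J₂` with `|J₁| ≥ m`, `|J₂| ≥ c(n-m)`,
whose coordinates are `ρ/(2√n)`-separated; moreover some `J₁' ⊆ J₁` with `|J₁'| ≥ cm` has
all its `r`-averages `ρ/(4√n)`-separated from the `r`-averages over `J₂`. -/
theorem bimodal_component :
    ∃ c : ℝ, 0 < c ∧
      ∀ n m : ℕ, ∀ ρ : ℝ, 0 < ρ →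
        ∀ u : EuclideanSpace ℂ (Fin n), ‖u‖ = 1 → u ∉ flatVecs n m ρ →
          ∃ J₁ J₂ : Finset (Fin n), Disjoint J₁ J₂ ∧
            m ≤ J₁.card ∧ c * ((n : ℝ) - m) ≤ J₂.card ∧
            (∀ j₁ ∈ J₁, ∀ j₂ ∈ J₂,
              ρ / (2 * Real.sqrt n) ≤ ‖coords u j₁ - coords u j₂‖) ∧
            ∃ J₁' ⊆ J₁, c * m ≤ (J₁'.card : ℝ) ∧
              ∀ r : ℕ, 1 ≤ r → r ≤ min J₁'.card J₂.card →
                ∀ J₁'' ⊆ J₁', ∀ J₂'' ⊆ J₂, J₁''.card = r → J₂''.card = r →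
                  ρ / (4 * Real.sqrt n) ≤
                    ‖((r : ℂ))⁻¹ * ∑ j ∈ J₁'', coords u j -
                      ((r : ℂ))⁻¹ * ∑ j ∈ J₂'', coords u j‖ := by
  classical
  refine ⟨1/1000, by norm_num, ?_⟩
  intro n m ρ hρ u hu hflat
  have hn : 0 < n := by
    by_contra h
    push_neg at h
    interval_cases n
    · have : u = 0 := Subsingleton.elim u 0
      rw [this, norm_zero] at hu
      norm_num at hu
  have hsn : 0 < Real.sqrt n := Real.sqrt_pos.mpr (by exact_mod_cast hn)
  set x : Fin n → ℂ := coords u with hxdef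
  have hsum : ∑ i, ‖u i‖^2 = 1 := by
    have h := EuclideanSpace.norm_eq u
    rw [hu] at h
    have := Real.sqrt_eq_one.mp h.symm
    linarith [this]
  have hx1 : ∀ i, ‖x i‖ ≤ 1 := by
    intro i
    have h1 : ‖u i‖^2 ≤ 1 := by
      rw [← hsum]
      exact Finset.single_le_sum (fun j _ => sq_nonneg ‖u j‖) (mem_univ i)
    have h0 : (0:ℝ) ≤ ‖u i‖ := norm_nonneg _
    have : ‖u i‖ ≤ 1 := by nlinarith
    rwa [show ‖x i‖ = ‖u i‖ from rfl]
  have hmn : m < n := by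
    by_contra h
    push_neg at h
    exact hflat ⟨hu, u, by
      simp only [sparseVecs, Set.mem_setOf_eq]
      exact le_trans (le_trans (Set.ncard_le_ncard (Set.subset_univ _) (Set.finite_univ))
        (by rw [Set.ncard_univ]; simp)) h, 0, by simp [hρ.le]⟩
  set δ : ℝ := ρ / (2 * Real.sqrt n) with hδdef
  have hδ : 0 < δ := by positivity
  have h2δ : 2 * δ = ρ / Real.sqrt n := by
    rw [hδdef]; field_simp
  -- Fact F: every ball of radius 2δ misses more than m coordinates
  have hF : ∀ z : ℂ, m < (univ.filter fun i => 2*δ < ‖x i - z‖).card := by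
    intro z
    by_contra hcard
    push_neg at hcard
    set g : Fin n → ℂ := fun i => if 2*δ < ‖x i - z‖ then x i - z else 0 with hg
    set v : EuclideanSpace ℂ (Fin n) := (WithLp.equiv 2 (Fin n → ℂ)).symm g with hv
    have hvg : ∀ i, coords v i = g i := fun i => rfl
    apply hflat
    refine ⟨hu, v, ?_, z, ?_⟩
    · simp only [sparseVecs, Set.mem_setOf_eq]
      have hss : {j | coords v j ≠ 0} ⊆ ((univ.filter fun i => 2*δ < ‖x i - z‖) : Finset (Fin n)) := by
        intro j hj
        simp only [Set.mem_setOf_eq, hvg, hg] at hj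
        simp only [coe_filter, Set.mem_setOf_eq, mem_univ, true_and]
        by_contra hc
        exact hj (if_neg hc)
      calc ({j | coords v j ≠ 0} : Set (Fin n)).ncard
          ≤ (((univ.filter fun i => 2*δ < ‖x i - z‖) : Finset (Fin n)) : Set (Fin n)).ncard :=
            Set.ncard_le_ncard hss (Set.toFinite _)
        _ = (univ.filter fun i => 2*δ < ‖x i - z‖).card := Set.ncard_coe_finset _
        _ ≤ m := hcard
    · have hcoords : ∀ i, (u - v - z • onesE n) i = x i - g i - z := by
        intro i
        have h1 : (u - v - z • onesE n) i = u i - v i - z • (onesE n i) := rfl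
        rw [h1]
        have h2 : (onesE n) i = 1 := rfl
        have h3 : v i = g i := rfl
        rw [h2, h3, smul_eq_mul, mul_one]
        rfl
      have hnorm : ‖u - v - z • onesE n‖ = Real.sqrt (∑ i, ‖x i - g i - z‖^2) := by
        rw [EuclideanSpace.norm_eq]
        congr 1
        exact Finset.sum_congr rfl fun i _ => by rw [hcoords i]
      rw [hnorm]
      have hterm : ∀ i, ‖x i - g i - z‖^2 ≤ ρ^2/n := by
        intro i
        have hgi : g i = if 2*δ < ‖x i - z‖ then x i - z else 0 := rfl
        rw [hgi]
        split_ifs with h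
        · have : x i - (x i - z) - z = 0 := by ring
          rw [this, norm_zero]
          have : (0:ℝ) ≤ ρ^2/n := by positivity
          nlinarith
        · push_neg at h
          have h0 : ‖x i - 0 - z‖ = ‖x i - z‖ := by
            rw [sub_zero]
          rw [h0]
          have habs0 : (0:ℝ) ≤ ‖x i - z‖ := norm_nonneg _
          have h2 : (‖x i - z‖)^2 ≤ (2*δ)^2 := by nlinarith
          have h3 : (2*δ)^2 = ρ^2/n := by
            rw [h2δ, div_pow, Real.sq_sqrt (by positivity : (0:ℝ) ≤ (n:ℝ))]
          linarith
      have hsumle : ∑ i, ‖x i - g i - z‖^2 ≤ ρ^2 := by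
        calc ∑ i, ‖x i - g i - z‖^2 ≤ ∑ _i : Fin n, ρ^2/n := Finset.sum_le_sum (fun i _ => hterm i)
        _ = n * (ρ^2/n) := by rw [Finset.sum_const, Finset.card_univ, Fintype.card_fin]; ring
        _ = ρ^2 := by field_simp
      calc Real.sqrt (∑ i, ‖x i - g i - z‖^2) ≤ Real.sqrt (ρ^2) := Real.sqrt_le_sqrt hsumle
      _ = ρ := Real.sqrt_sq hρ.le
  -- choice of scale K
  set c' : ℝ := ((n:ℝ) - m)/1000 with hc'def
  have hmnr : (m:ℝ) < n := by exact_mod_cast hmn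
  have hc' : 0 < c' := by rw [hc'def]; linarith
  have hPex : ∃ k : ℕ, 1 ≤ k ∧ ∃ j : Fin n,
      c' ≤ ((univ.filter fun i => ‖x i - x j‖ ≤ (k:ℝ)*δ).card : ℝ) := by
    refine ⟨max 1 ⌈2/δ⌉₊, le_max_left _ _, ⟨0, hn⟩, ?_⟩
    have hall : (univ.filter fun i => ‖x i - x ⟨0, hn⟩‖ ≤ ((max 1 ⌈2/δ⌉₊ : ℕ):ℝ)*δ) = univ := by
      apply Finset.filter_true_of_mem
      intro i _
      have h1 : ‖x i - x ⟨0, hn⟩‖ ≤ 2 := by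
        calc ‖x i - x ⟨0, hn⟩‖ ≤ ‖x i‖ + ‖x ⟨0, hn⟩‖ :=
          norm_sub_le _ _
        _ ≤ 2 := by linarith [hx1 i, hx1 ⟨0, hn⟩]
      have h2 : 2 ≤ ((max 1 ⌈2/δ⌉₊ : ℕ):ℝ)*δ := by
        have hle : 2/δ ≤ (⌈2/δ⌉₊ : ℝ) := Nat.le_ceil _
        have hle2 : ((⌈2/δ⌉₊ : ℕ):ℝ) ≤ ((max 1 ⌈2/δ⌉₊ : ℕ):ℝ) := by
          exact_mod_cast le_max_right 1 ⌈2/δ⌉₊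
        have hmul : 2/δ * δ ≤ ((max 1 ⌈2/δ⌉₊ : ℕ):ℝ) * δ :=
          mul_le_mul_of_nonneg_right (hle.trans hle2) hδ.le
        rwa [div_mul_cancel₀ 2 hδ.ne'] at hmul
      linarith
    rw [hall, Finset.card_univ, Fintype.card_fin]
    rw [hc'def]
    linarith
  set K := Nat.find hPex with hKdef
  obtain ⟨hK1, j₀, hj₀⟩ := Nat.find_spec hPex
  set z₀ := x j₀ with hz₀def
  set J₂ : Finset (Fin n) := univ.filter fun i => ‖x i - z₀‖ ≤ (K:ℝ)*δ with hJ₂def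
  set R : ℝ := if K = 1 then 2*δ else 2*((K:ℝ)+1)*δ with hRdef
  have hRsep : (K:ℝ)*δ + δ ≤ R := by
    rw [hRdef]
    split_ifs with h
    · rw [h]; push_cast; linarith
    · have : (2:ℝ) ≤ K := by exact_mod_cast (by omega : 2 ≤ K)
      nlinarith
  have hRavg : δ/2 ≤ (3/4)*R - (K:ℝ)*δ := by
    rw [hRdef]
    split_ifs with h
    · rw [h]; push_cast; linarith
    · have h1 : (1:ℝ) ≤ K := by exact_mod_cast hK1
      nlinarith
  have hR0 : 0 < R := by
    have h0 : (0:ℝ) ≤ (K:ℝ)*δ := by positivity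
    linarith
  set J₁ : Finset (Fin n) := univ.filter fun i => R < ‖x i - z₀‖ with hJ₁def
  -- size of J₁
  have hJ₁card : m ≤ J₁.card := by
    rcases eq_or_ne K 1 with hK | hK
    · have hRe : J₁ = univ.filter fun i => 2*δ < ‖x i - z₀‖ := by
        rw [hJ₁def, hRdef, if_pos hK]
      rw [hRe]
      exact (hF z₀).le
    · -- K ≥ 2 : grid covering argument
      have hK2 : 2 ≤ K := by omega
      have hK2r : (2:ℝ) ≤ (K:ℝ) := by exact_mod_cast hK2
      have hRe : R = 2*((K:ℝ)+1)*δ := by rw [hRdef, if_neg hK]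
      have hmin : ∀ j : Fin n,
          ((univ.filter fun i => ‖x i - x j‖ ≤ ((K:ℝ)-1)*δ).card : ℝ) < c' := by
        intro j
        have hnot := Nat.find_min hPex (show K - 1 < K by omega)
        push_neg at hnot
        have hcast : (((K-1 : ℕ)):ℝ) = (K:ℝ) - 1 := by
          have : (1:ℕ) ≤ K := hK1
          push_cast [this]
          ring
        have := hnot (by omega : 1 ≤ K - 1) j
        rw [hcast] at this
        linarith
      by_contra hcon
      push_neg at hcon
      set Sb : Finset (Fin n) := univ.filter fun i => ‖x i - z₀‖ ≤ R with hSbdef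
      have hsplit : J₁.card + Sb.card = n := by
        rw [hJ₁def, hSbdef]
        have h := Finset.card_filter_add_card_filter_not
          (s := (univ : Finset (Fin n))) (p := fun i => R < ‖x i - z₀‖)
        simp only [not_lt] at h
        rw [Finset.card_univ, Fintype.card_fin] at h
        exact h
      have hbig : ((n:ℝ) - m) < Sb.card := by
        have hnat : n + 1 ≤ m + Sb.card := by omega
        have := (Nat.cast_le (α := ℝ)).mpr hnat
        push_cast at this
        linarith
      set s : ℝ := ((K:ℝ)-1)*δ with hsdef
      have hs : 0 < s := by nlinarith
      set t : ℝ := s/2 with htdef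
      have ht : 0 < t := by positivity
      set f : Fin n → ℤ × ℤ := fun i => (⌊(x i).re / t⌋, ⌊(x i).im / t⌋) with hfdef
      have hfloor : ∀ a b : ℝ, ⌊a/t⌋ = ⌊b/t⌋ → |a - b| < t := by
        intro a b hab
        have h1 := Int.floor_le (a/t)
        have h2 := Int.lt_floor_add_one (a/t)
        have h3 := Int.floor_le (b/t)
        have h4 := Int.lt_floor_add_one (b/t)
        rw [hab] at h1 h2
        have hd1 : a/t - b/t < 1 := by linarith
        have hd2 : b/t - a/t < 1 := by linarith
        rw [abs_lt]
        constructor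
        · have := (div_lt_one ht).mp (by rw [sub_div]; exact hd2)
          linarith
        · have := (div_lt_one ht).mp (by rw [sub_div]; exact hd1)
          linarith
      have hfib : ∀ p ∈ Sb.image f, ((Sb.filter fun i => f i = p).card : ℝ) ≤ c' := by
        intro p hp
        obtain ⟨q, hq, hfq⟩ := Finset.mem_image.mp hp
        have hsub : (Sb.filter fun i => f i = p) ⊆
            (univ.filter fun i => ‖x i - x q‖ ≤ ((K:ℝ)-1)*δ) := by
          intro i hi
          rw [Finset.mem_filter] at hi
          obtain ⟨_, hip⟩ := hi
          rw [Finset.mem_filter]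
          refine ⟨mem_univ i, ?_⟩
          have hre : |(x i).re - (x q).re| < t := by
            apply hfloor
            have : f i = f q := by rw [hip, hfq]
            exact congrArg Prod.fst this
          have him : |(x i).im - (x q).im| < t := by
            apply hfloor
            have : f i = f q := by rw [hip, hfq]
            exact congrArg Prod.snd this
          calc ‖x i - x q‖ ≤ |(x i - x q).re| + |(x i - x q).im| :=
            Complex.norm_le_abs_re_add_abs_im _
          _ = |(x i).re - (x q).re| + |(x i).im - (x q).im| := by
            rw [Complex.sub_re, Complex.sub_im]
          _ ≤ t + t := by linarith
          _ = s := by rw [htdef]; ring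
        calc ((Sb.filter fun i => f i = p).card : ℝ)
            ≤ ((univ.filter fun i => ‖x i - x q‖ ≤ ((K:ℝ)-1)*δ).card : ℝ) := by
              exact_mod_cast Finset.card_le_card hsub
        _ ≤ c' := (hmin q).le
      have hIccR : ∀ cc : ℝ, ((Finset.Icc ⌊(cc - R)/t⌋ ⌊(cc + R)/t⌋).card : ℝ) ≤ 26 := by
        intro cc
        rw [Int.card_Icc]
        have h2Rt : 2*R ≤ 24*t := by
          rw [hRe, htdef, hsdef]
          nlinarith
        have hb : (⌊(cc + R)/t⌋ : ℝ) + 1 - ⌊(cc - R)/t⌋ ≤ 26 := by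
          have h1 := Int.floor_le ((cc + R)/t)
          have h2 := Int.sub_one_lt_floor ((cc - R)/t)
          have h3 : (cc + R)/t - (cc - R)/t = 2*R/t := by field_simp; ring
          have h4 : 2*R/t ≤ 24 := by
            rw [div_le_iff₀ ht]; linarith
          linarith
        rcases le_or_gt (⌊(cc + R)/t⌋ + 1 - ⌊(cc - R)/t⌋) 0 with hle | hlt
        · rw [Int.toNat_of_nonpos hle]
          norm_num
        · have hcast : (((⌊(cc + R)/t⌋ + 1 - ⌊(cc - R)/t⌋).toNat : ℕ) : ℝ)
              = ((⌊(cc + R)/t⌋ + 1 - ⌊(cc - R)/t⌋ : ℤ) : ℝ) := by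
            exact_mod_cast congrArg (Int.cast : ℤ → ℝ) (Int.toNat_of_nonneg hlt.le)
          rw [hcast]
          push_cast
          push_cast at hb
          linarith
      have himg : Sb.image f ⊆ Finset.Icc ⌊(z₀.re - R)/t⌋ ⌊(z₀.re + R)/t⌋ ×ˢ
          Finset.Icc ⌊(z₀.im - R)/t⌋ ⌊(z₀.im + R)/t⌋ := by
        intro p hp
        obtain ⟨q, hq, hfq⟩ := Finset.mem_image.mp hp
        rw [hSbdef, Finset.mem_filter] at hq
        have hre : |(x q).re - z₀.re| ≤ R := by
          have := Complex.abs_re_le_norm (x q - z₀)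
          rw [Complex.sub_re] at this
          linarith [hq.2]
        have him : |(x q).im - z₀.im| ≤ R := by
          have := Complex.abs_im_le_norm (x q - z₀)
          rw [Complex.sub_im] at this
          linarith [hq.2]
        rw [Finset.mem_product, ← hfq]
        rw [abs_le] at hre him
        have hfq1 : (f q).1 = ⌊(x q).re / t⌋ := rfl
        have hfq2 : (f q).2 = ⌊(x q).im / t⌋ := rfl
        rw [hfq1, hfq2]
        refine ⟨Finset.mem_Icc.mpr ⟨?_, ?_⟩, Finset.mem_Icc.mpr ⟨?_, ?_⟩⟩
        · exact Int.floor_le_floor (by gcongr ?_ / t; linarith [hre.1])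
        · exact Int.floor_le_floor (by gcongr ?_ / t; linarith [hre.2])
        · exact Int.floor_le_floor (by gcongr ?_ / t; linarith [him.1])
        · exact Int.floor_le_floor (by gcongr ?_ / t; linarith [him.2])
      have himgcard : ((Sb.image f).card : ℝ) ≤ 676 := by
        have h1 : (Sb.image f).card ≤ (Finset.Icc ⌊(z₀.re - R)/t⌋ ⌊(z₀.re + R)/t⌋ ×ˢ
            Finset.Icc ⌊(z₀.im - R)/t⌋ ⌊(z₀.im + R)/t⌋).card := Finset.card_le_card himg
        rw [Finset.card_product] at h1
        have h2 := hIccR z₀.re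
        have h3 := hIccR z₀.im
        have h4 : ((Sb.image f).card : ℝ) ≤
            ((Finset.Icc ⌊(z₀.re - R)/t⌋ ⌊(z₀.re + R)/t⌋).card : ℝ) *
            ((Finset.Icc ⌊(z₀.im - R)/t⌋ ⌊(z₀.im + R)/t⌋).card : ℝ) := by
          exact_mod_cast h1
        nlinarith [Nat.cast_nonneg (α := ℝ) (Finset.Icc ⌊(z₀.re - R)/t⌋ ⌊(z₀.re + R)/t⌋).card,
          Nat.cast_nonneg (α := ℝ) (Finset.Icc ⌊(z₀.im - R)/t⌋ ⌊(z₀.im + R)/t⌋).card]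
      have hSbcard : (Sb.card : ℝ) ≤ 676 * c' := by
        have hsum1 : Sb.card = ∑ p ∈ Sb.image f, (Sb.filter fun i => f i = p).card :=
          Finset.card_eq_sum_card_fiberwise (fun i hi => Finset.mem_image_of_mem f hi)
        have hsum2 : (Sb.card : ℝ) = ∑ p ∈ Sb.image f, ((Sb.filter fun i => f i = p).card : ℝ) := by
          rw [hsum1]; push_cast; ring
        rw [hsum2]
        calc ∑ p ∈ Sb.image f, ((Sb.filter fun i => f i = p).card : ℝ)
            ≤ ∑ _p ∈ Sb.image f, c' := Finset.sum_le_sum hfib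
        _ = ((Sb.image f).card : ℝ) * c' := by rw [Finset.sum_const, nsmul_eq_mul]
        _ ≤ 676 * c' := mul_le_mul_of_nonneg_right himgcard hc'.le
      rw [hc'def] at hSbcard
      linarith
  -- pigeonhole over the 8 directions
  set T : Fin 8 → Finset (Fin n) := fun t => J₁.filter fun i =>
    (3/4) * ‖x i - z₀‖ ≤ ((starRingEnd ℂ) (dirE t) * (x i - z₀)).re with hTdef
  have hTex : ∃ t : Fin 8, (m:ℝ)/8 ≤ ((T t).card : ℝ) := by
    by_contra hc
    push_neg at hc
    have hsub : J₁ ⊆ Finset.univ.biUnion T := by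
      intro i hi
      obtain ⟨t, ht⟩ := dirE_cover (x i - z₀)
      exact Finset.mem_biUnion.mpr ⟨t, mem_univ t, Finset.mem_filter.mpr ⟨hi, ht⟩⟩
    have h1 : (J₁.card : ℝ) ≤ ∑ t : Fin 8, ((T t).card : ℝ) := by
      have h := (Finset.card_le_card hsub).trans Finset.card_biUnion_le
      have h' : (J₁.card : ℝ) ≤ ((∑ t : Fin 8, (T t).card : ℕ) : ℝ) := by exact_mod_cast h
      rwa [Nat.cast_sum] at h'
    have h2 : ∑ t : Fin 8, ((T t).card : ℝ) < ∑ _t : Fin 8, (m:ℝ)/8 :=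
      Finset.sum_lt_sum_of_nonempty Finset.univ_nonempty (fun t _ => hc t)
    have h3 : ∑ _t : Fin 8, (m:ℝ)/8 = m := by
      rw [Finset.sum_const, Finset.card_univ]
      simp
      ring
    have h4 : (m:ℝ) ≤ J₁.card := by exact_mod_cast hJ₁card
    linarith
  obtain ⟨t₀, ht₀⟩ := hTex
  refine ⟨J₁, J₂, ?_, hJ₁card, ?_, ?_, T t₀, Finset.filter_subset _ _, ?_, ?_⟩
  · -- disjointness
    rw [Finset.disjoint_left]
    intro i hi1 hi2
    rw [hJ₁def, Finset.mem_filter] at hi1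
    rw [hJ₂def, Finset.mem_filter] at hi2
    linarith [hi1.2, hi2.2]
  · -- J₂ is large
    linarith [hj₀]
  · -- pairwise separation
    intro j₁ hj₁ j₂ hj₂
    rw [hJ₁def, Finset.mem_filter] at hj₁
    rw [hJ₂def, Finset.mem_filter] at hj₂
    have htri := norm_sub_norm_le (x j₁ - z₀) (x j₂ - z₀)
    rw [sub_sub_sub_cancel_right] at htri
    linarith [hj₁.2, hj₂.2]
  · -- J₁' is large
    calc (1:ℝ)/1000 * m ≤ (m:ℝ)/8 := by
          have : (0:ℝ) ≤ m := Nat.cast_nonneg m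
          linarith
    _ ≤ _ := ht₀
  · -- average separation
    intro r hr1 hrmin J₁'' hsub1 J₂'' hsub2 hcard1 hcard2
    have hrpos : (0:ℝ) < (r:ℝ) := by exact_mod_cast hr1
    have hgoalL : ρ / (4 * Real.sqrt n) = δ/2 := by
      rw [hδdef, div_div]
      congr 1
      ring
    set e := dirE t₀ with hedef
    have habse : ‖e‖ = 1 := dirE_abs t₀
    have hmem1 : ∀ j ∈ J₁'', R < ‖x j - z₀‖ ∧
        (3/4) * ‖x j - z₀‖ ≤ ((starRingEnd ℂ) e * (x j - z₀)).re := by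
      intro j hj
      have hjT := hsub1 hj
      rw [hTdef, Finset.mem_filter] at hjT
      have hjJ₁ := hjT.1
      rw [hJ₁def, Finset.mem_filter] at hjJ₁
      exact ⟨hjJ₁.2, hjT.2⟩
    have hre1 : (r:ℝ) * ((3/4)*R) ≤ ∑ j ∈ J₁'', ((starRingEnd ℂ) e * (x j - z₀)).re := by
      have heq : (r:ℝ) * ((3/4)*R) = ∑ _j ∈ J₁'', ((3/4)*R) := by
        rw [Finset.sum_const, hcard1, nsmul_eq_mul]
      rw [heq]
      refine Finset.sum_le_sum fun j hj => ?_
      have h := hmem1 j hj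
      nlinarith [h.1, h.2, hR0]
    have hre2 : ∑ j ∈ J₂'', ((starRingEnd ℂ) e * (x j - z₀)).re ≤ (r:ℝ) * ((K:ℝ)*δ) := by
      have heq : (r:ℝ) * ((K:ℝ)*δ) = ∑ _j ∈ J₂'', ((K:ℝ)*δ) := by
        rw [Finset.sum_const, hcard2, nsmul_eq_mul]
      rw [heq]
      refine Finset.sum_le_sum fun j hj => ?_
      have h1 : ((starRingEnd ℂ) e * (x j - z₀)).re
          ≤ ‖(starRingEnd ℂ) e * (x j - z₀)‖ := Complex.re_le_norm _
      rw [norm_mul, Complex.norm_conj, habse, one_mul] at h1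
      have hjm := hsub2 hj
      rw [hJ₂def, Finset.mem_filter] at hjm
      linarith [hjm.2]
    have hA1 : ∑ j ∈ J₁'', (starRingEnd ℂ) e * (x j - z₀)
        = (starRingEnd ℂ) e * (∑ j ∈ J₁'', x j) - (r:ℂ) * ((starRingEnd ℂ) e * z₀) := by
      have h1 : ∑ j ∈ J₁'', (starRingEnd ℂ) e * (x j - z₀)
          = ∑ j ∈ J₁'', ((starRingEnd ℂ) e * x j - (starRingEnd ℂ) e * z₀) :=
        Finset.sum_congr rfl fun j _ => by ring
      rw [h1, Finset.sum_sub_distrib, ← Finset.mul_sum, Finset.sum_const, hcard1, nsmul_eq_mul]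
    have hA2 : ∑ j ∈ J₂'', (starRingEnd ℂ) e * (x j - z₀)
        = (starRingEnd ℂ) e * (∑ j ∈ J₂'', x j) - (r:ℂ) * ((starRingEnd ℂ) e * z₀) := by
      have h1 : ∑ j ∈ J₂'', (starRingEnd ℂ) e * (x j - z₀)
          = ∑ j ∈ J₂'', ((starRingEnd ℂ) e * x j - (starRingEnd ℂ) e * z₀) :=
        Finset.sum_congr rfl fun j _ => by ring
      rw [h1, Finset.sum_sub_distrib, ← Finset.mul_sum, Finset.sum_const, hcard2, nsmul_eq_mul]
    set D : ℂ := ((r : ℂ))⁻¹ * ∑ j ∈ J₁'', x j - ((r : ℂ))⁻¹ * ∑ j ∈ J₂'', x j with hDdef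
    have hd : (starRingEnd ℂ) e * D = (((r:ℝ)⁻¹ : ℝ) : ℂ) *
        ((∑ j ∈ J₁'', (starRingEnd ℂ) e * (x j - z₀)) -
         (∑ j ∈ J₂'', (starRingEnd ℂ) e * (x j - z₀))) := by
      rw [hDdef, hA1, hA2]
      push_cast
      ring
    have hDre : ((starRingEnd ℂ) e * D).re = (r:ℝ)⁻¹ *
        ((∑ j ∈ J₁'', ((starRingEnd ℂ) e * (x j - z₀)).re) -
         (∑ j ∈ J₂'', ((starRingEnd ℂ) e * (x j - z₀)).re)) := by
      rw [hd, Complex.re_ofReal_mul, Complex.sub_re, Complex.re_sum, Complex.re_sum]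
    have hmid : δ/2 ≤ ((starRingEnd ℂ) e * D).re := by
      rw [hDre]
      have h5 : (r:ℝ) * (δ/2) ≤
          (∑ j ∈ J₁'', ((starRingEnd ℂ) e * (x j - z₀)).re) -
          (∑ j ∈ J₂'', ((starRingEnd ℂ) e * (x j - z₀)).re) := by
        nlinarith [hre1, hre2, hRavg, hrpos]
      have h6 := mul_le_mul_of_nonneg_left h5 (inv_nonneg.mpr hrpos.le)
      have h7 : (r:ℝ)⁻¹ * ((r:ℝ) * (δ/2)) = δ/2 := by
        field_simp
      linarith
    have hfin : ((starRingEnd ℂ) e * D).re ≤ ‖D‖ := by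
      calc ((starRingEnd ℂ) e * D).re ≤ ‖(starRingEnd ℂ) e * D‖ := Complex.re_le_norm _
      _ = ‖D‖ := by rw [norm_mul, Complex.norm_conj, habse, one_mul]
    rw [hgoalL]
    linarith

end
end

section
/- (Tensorization of anti-concentration, Lemma 4.2.) Let ε₀ > 0 and p₀ ∈ (0,1). There exist c₁, p₁ ∈ (0,1) depending only on p₀ such that: if ζ₁,…,ζ_n are independent non-negative real random variables with P(ζ_j ≤ ε₀) ≤ p₀ for every j ∈ [n], then P( Σ_{j=1}^n ζ_j² ≤ c₁ ε₀² n ) ≤ p₁ⁿ. -/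
open MeasureTheory ProbabilityTheory
open scoped ENNReal BigOperators

/-- **Tensorization of anti-concentration** (Lemma 4.2): if `ζ₁, …, ζ_n` are independent
non-negative random variables with `P(ζ_j ≤ ε₀) ≤ p₀` for every `j`, then
`P(Σ_j ζ_j² ≤ c₁ ε₀² n) ≤ p₁ⁿ`, where `c₁, p₁ ∈ (0,1)` depend only on `p₀`. -/
theorem tensorization_anticoncentration (ε₀ : ℝ) (hε₀ : 0 < ε₀) (p₀ : ℝ)
    (hp₀ : p₀ ∈ Set.Ioo (0 : ℝ) 1) :
    ∃ c₁ p₁ : ℝ, c₁ ∈ Set.Ioo (0 : ℝ) 1 ∧ p₁ ∈ Set.Ioo (0 : ℝ) 1 ∧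
      ∀ (n : ℕ) (Ω : Type) (_ : MeasurableSpace Ω) (μ : Measure Ω),
        IsProbabilityMeasure μ →
        ∀ ζ : Fin n → Ω → ℝ,
          (∀ j, Measurable (ζ j)) →
          (∀ j ω, 0 ≤ ζ j ω) →
          iIndepFun ζ μ →
          (∀ j, μ {ω | ζ j ω ≤ ε₀} ≤ ENNReal.ofReal p₀) →
          μ {ω | ∑ j, (ζ j ω) ^ 2 ≤ c₁ * ε₀ ^ 2 * n} ≤ ENNReal.ofReal (p₁ ^ n) := by
  obtain ⟨hp₀0, hp₀1⟩ := hp₀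
  -- the per-coordinate mgf bound
  set r : ℝ := Real.exp (-1) + (1 - Real.exp (-1)) * p₀ with hr_def
  have hexp1 : Real.exp (-1) < 1 := by
    rw [Real.exp_lt_one_iff]; norm_num
  have hr_pos : 0 < r := by
    have := Real.exp_pos (-1)
    have : 0 < (1 - Real.exp (-1)) * p₀ := mul_pos (by linarith) hp₀0
    positivity
  have hr_lt1 : r < 1 := by
    nlinarith [Real.exp_pos (-1)]
  set L : ℝ := -Real.log r with hL_def
  have hL_pos : 0 < L := by
    have := Real.log_neg hr_pos hr_lt1
    simp only [hL_def]; linarith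
  set c₁ : ℝ := min (1 / 2) (L / 2) with hc₁_def
  have hc₁_pos : 0 < c₁ := lt_min (by norm_num) (by linarith)
  have hc₁_lt1 : c₁ < 1 := lt_of_le_of_lt (min_le_left _ _) (by norm_num)
  set p₁ : ℝ := Real.exp c₁ * r with hp₁_def
  have hp₁_pos : 0 < p₁ := mul_pos (Real.exp_pos _) hr_pos
  have hp₁_lt1 : p₁ < 1 := by
    have heq : p₁ = Real.exp (c₁ + Real.log r) := by
      rw [hp₁_def, Real.exp_add, Real.exp_log hr_pos]
    rw [heq, show (1 : ℝ) = Real.exp 0 from Real.exp_zero.symm, Real.exp_lt_exp]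
    have h1 : c₁ ≤ L / 2 := min_le_right _ _
    have h2 : Real.log r = -L := by simp [hL_def]
    linarith
  refine ⟨c₁, p₁, ⟨hc₁_pos, hc₁_lt1⟩, ⟨hp₁_pos, hp₁_lt1⟩, ?_⟩
  intro n Ω mΩ μ hμ ζ hζ_meas hζ_nonneg hζ_indep hζ_small
  set t : ℝ := -(ε₀ ^ 2)⁻¹ with ht_def
  have ht_neg : t ≤ 0 := by
    have : (0:ℝ) ≤ (ε₀ ^ 2)⁻¹ := by positivity
    simp only [ht_def]; linarith
  set X : Fin n → Ω → ℝ := fun j ω => ζ j ω ^ 2 with hX_def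
  have hX_meas : ∀ j, Measurable (X j) := fun j => (hζ_meas j).pow_const 2
  have hX_nonneg : ∀ j ω, 0 ≤ X j ω := fun j ω => sq_nonneg _
  have hX_indep : iIndepFun X μ :=
    hζ_indep.comp (fun _ x => x ^ 2) (fun _ => measurable_id.pow_const 2)
  -- integrability of the exponentials
  have h_int : ∀ (g : Ω → ℝ), Measurable g → (∀ ω, 0 ≤ g ω) →
      Integrable (fun ω => Real.exp (t * g ω)) μ := by
    intro g hg hg0
    refine (integrable_const (1 : ℝ)).mono'
      ((hg.const_mul t).exp.aestronglyMeasurable) (ae_of_all _ fun ω => ?_)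
    rw [Real.norm_eq_abs, Real.abs_exp, Real.exp_le_one_iff]
    exact mul_nonpos_of_nonpos_of_nonneg ht_neg (hg0 ω)
  -- the per-coordinate mgf bound
  have h_mgf : ∀ j, mgf (X j) μ t ≤ r := by
    intro j
    have hA : MeasurableSet {ω | ζ j ω ≤ ε₀} := (hζ_meas j) measurableSet_Iic
    have hbound : ∀ ω, Real.exp (t * X j ω) ≤
        Set.indicator {ω | ζ j ω ≤ ε₀} (fun _ => 1 - Real.exp (-1)) ω + Real.exp (-1) := by
      intro ω
      by_cases h : ζ j ω ≤ ε₀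
      · rw [Set.indicator_of_mem (show ω ∈ {ω' | ζ j ω' ≤ ε₀} from h) (fun _ => 1 - Real.exp (-1))]
        have : t * X j ω ≤ 0 := mul_nonpos_of_nonpos_of_nonneg ht_neg (hX_nonneg j ω)
        have := Real.exp_le_one_iff.mpr this
        linarith
      · rw [Set.indicator_of_notMem (show ω ∉ {ω' | ζ j ω' ≤ ε₀} from h) (fun _ => 1 - Real.exp (-1))]
        push_neg at h
        have h2 : ε₀ ^ 2 ≤ X j ω := by
          simp only [hX_def]
          exact pow_le_pow_left₀ hε₀.le h.le 2
        have hε2 : (0 : ℝ) < ε₀ ^ 2 := by positivity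
        have hle : t * X j ω ≤ -1 := by
          have h3 : 1 ≤ (ε₀ ^ 2)⁻¹ * X j ω := by
            rw [← inv_mul_cancel₀ hε2.ne']
            exact mul_le_mul_of_nonneg_left h2 (by positivity)
          simp only [ht_def, neg_mul]
          linarith
        simpa using Real.exp_le_exp.mpr hle
    have h_int_rhs : Integrable (fun ω =>
        Set.indicator {ω | ζ j ω ≤ ε₀} (fun _ => 1 - Real.exp (-1)) ω + Real.exp (-1)) μ :=
      ((integrable_const _).indicator hA).add (integrable_const _)
    have hμA : (μ {ω | ζ j ω ≤ ε₀}).toReal ≤ p₀ := by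
      have := hζ_small j
      have h1 : (μ {ω | ζ j ω ≤ ε₀}).toReal ≤ (ENNReal.ofReal p₀).toReal :=
        ENNReal.toReal_mono ENNReal.ofReal_ne_top this
      rwa [ENNReal.toReal_ofReal hp₀0.le] at h1
    calc mgf (X j) μ t
        ≤ ∫ ω, (Set.indicator {ω | ζ j ω ≤ ε₀} (fun _ => 1 - Real.exp (-1)) ω
            + Real.exp (-1)) ∂μ :=
          integral_mono (h_int _ (hX_meas j) (hX_nonneg j)) h_int_rhs hbound
      _ = (1 - Real.exp (-1)) * (μ {ω | ζ j ω ≤ ε₀}).toReal + Real.exp (-1) := by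
          rw [integral_add ((integrable_const _).indicator hA) (integrable_const _),
            integral_indicator_const _ hA, integral_const]
          simp [smul_eq_mul, mul_comm, Measure.real]
      _ ≤ (1 - Real.exp (-1)) * p₀ + Real.exp (-1) := by
          have h1 : 0 ≤ 1 - Real.exp (-1) := by linarith
          nlinarith
      _ = r := by rw [hr_def]; ring
  -- Chernoff bound
  have h_int_sum : Integrable (fun ω => Real.exp (t * (∑ j, X j) ω)) μ := by
    have := h_int (fun ω => ∑ j, X j ω)
      (Finset.measurable_sum _ fun j _ => hX_meas j)
      (fun ω => Finset.sum_nonneg fun j _ => hX_nonneg j ω)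
    simpa [Finset.sum_apply] using this
  have h_chernoff := measure_le_le_exp_mul_mgf (X := ∑ j, X j) (μ := μ)
    (c₁ * ε₀ ^ 2 * n) ht_neg h_int_sum
  rw [hX_indep.mgf_sum hX_meas] at h_chernoff
  have h_prod : ∏ j : Fin n, mgf (X j) μ t ≤ r ^ n := by
    calc ∏ j : Fin n, mgf (X j) μ t ≤ ∏ _j : Fin n, r :=
          Finset.prod_le_prod (fun j _ => mgf_nonneg) (fun j _ => h_mgf j)
      _ = r ^ n := by simp
  have h_exp_eq : Real.exp (-t * (c₁ * ε₀ ^ 2 * n)) = Real.exp c₁ ^ n := by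
    rw [← Real.exp_nat_mul]
    congr 1
    rw [ht_def]
    have : ε₀ ^ 2 ≠ 0 := by positivity
    field_simp
  have h_final : (μ {ω | (∑ j, X j) ω ≤ c₁ * ε₀ ^ 2 * n}).toReal ≤ p₁ ^ n := by
    calc (μ {ω | (∑ j, X j) ω ≤ c₁ * ε₀ ^ 2 * n}).toReal
        ≤ Real.exp (-t * (c₁ * ε₀ ^ 2 * n)) * ∏ j : Fin n, mgf (X j) μ t := h_chernoff
      _ ≤ Real.exp c₁ ^ n * r ^ n := by
          rw [h_exp_eq]
          have : (0 : ℝ) ≤ Real.exp c₁ ^ n := by positivity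
          exact mul_le_mul_of_nonneg_left h_prod this
      _ = p₁ ^ n := by rw [hp₁_def, mul_pow]
  have h_set_eq : {ω | ∑ j, (ζ j ω) ^ 2 ≤ c₁ * ε₀ ^ 2 * n}
      = {ω | (∑ j, X j) ω ≤ c₁ * ε₀ ^ 2 * n} := by
    ext ω; simp [hX_def]
  rw [h_set_eq]
  have hne : μ {ω | (∑ j, X j) ω ≤ c₁ * ε₀ ^ 2 * n} ≠ ⊤ := measure_ne_top _ _
  rw [← ENNReal.ofReal_toReal hne]
  exact ENNReal.ofReal_le_ofReal h_final
end

section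
/- (Concentration for Hoeffding-type statistics of a random injection, Lemma 5.4.) Let S, T be finite sets with m = |S| ≤ |T|, let σ : S → T be a uniform random injection, let (T_i)_{i∈S} be fixed subsets of T, and set N_σ = #{i ∈ S : σ(i) ∈ T_i}. Then E N_σ = (1/|T|) Σ_{i∈S} |T_i|, and for every δ > 0, P( |N_σ − E N_σ| ≥ δ E N_σ ) ≤ 2 exp( −(δ²/(4+2δ)) · E N_σ ). In particular, if T₀ ⊆ T is fixed and U ⊆ T is a uniform random subset of size m, then for every δ > 0, P( | |U ∩ T₀| − m|T₀|/|T| | ≥ δ · m|T₀|/|T| ) ≤ 2 exp( −(δ²/(4+2δ)) · m|T₀|/|T| ). -/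
open scoped BigOperators

noncomputable section

/-- The set of injections from `S` to `T`, as a finset. -/
def injFinset (S T : Type*) [Fintype S] [Fintype T] [DecidableEq S] [DecidableEq T] :
    Finset (S → T) :=
  Finset.univ.filter fun σ => Function.Injective σ

/-- `N_σ = #{i ∈ S : σ(i) ∈ T_i}`. -/
def hitCount {S T : Type*} [Fintype S] [DecidableEq T] (Ti : S → Finset T) (σ : S → T) : ℕ :=
  (Finset.univ.filter fun i => σ i ∈ Ti i).card

set_option maxHeartbeats 1000000

set_option linter.unusedSectionVars false

namespace RIC

variable {S T : Type*} [Fintype S] [Fintype T] [DecidableEq S] [DecidableEq T]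

lemma mem_injFinset {σ : S → T} : σ ∈ injFinset S T ↔ Function.Injective σ := by
  simp [injFinset]

lemma injFinset_nonempty (h : Fintype.card S ≤ Fintype.card T) :
    (injFinset S T).Nonempty := by
  obtain ⟨f⟩ := Function.Embedding.nonempty_of_card_le h
  exact ⟨f, mem_injFinset.2 f.injective⟩

lemma swap_comp_mem {σ : S → T} (hσ : σ ∈ injFinset S T) (a b : T) :
    (⇑(Equiv.swap a b) ∘ σ) ∈ injFinset S T :=
  mem_injFinset.2 ((Equiv.swap a b).injective.comp (mem_injFinset.1 hσ))

/-- Key double counting via the swap map. -/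
lemma sum_swap_eq (i : S) (t : T) (g : (S → T) → ℝ) :
    ∑ σ ∈ injFinset S T, g (⇑(Equiv.swap t (σ i)) ∘ σ) =
      (Fintype.card T : ℝ) * ∑ σ ∈ (injFinset S T).filter (fun σ => σ i = t), g σ := by
  rw [Finset.mul_sum]
  have h1 : ∀ σ ∈ (injFinset S T).filter (fun σ => σ i = t), (Fintype.card T : ℝ) * g σ =
      ∑ _v : T, g σ := by
    intro σ _; rw [Finset.sum_const, Finset.card_univ, nsmul_eq_mul]
  rw [Finset.sum_congr rfl h1, ← Finset.sum_product']
  refine Finset.sum_nbij' (fun σ => ((⇑(Equiv.swap t (σ i)) ∘ σ, σ i) : (S → T) × T))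
    (fun p => ⇑(Equiv.swap p.2 t) ∘ p.1) ?_ ?_ ?_ ?_ ?_
  · intro σ hσ
    simp only [Finset.mem_product, Finset.mem_filter, Finset.mem_univ, and_true]
    exact ⟨swap_comp_mem hσ _ _, by simp⟩
  · intro p hp
    simp only [Finset.mem_product, Finset.mem_filter] at hp
    exact swap_comp_mem hp.1.1 _ _
  · intro σ hσ
    funext x
    simp only [Function.comp_apply]
    rw [Equiv.swap_comm]
    exact Equiv.swap_apply_self _ _ (σ x)
  · intro p hp
    simp only [Finset.mem_product, Finset.mem_filter] at hp
    obtain ⟨⟨_, hpt⟩, _⟩ := hp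
    refine Prod.ext ?_ ?_
    · funext x
      simp only [Function.comp_apply, hpt, Equiv.swap_apply_right]
      rw [Equiv.swap_comm t p.2, Equiv.swap_apply_self]
    · simp [Function.comp_apply, hpt, Equiv.swap_apply_right]
  · intro σ hσ; rfl

lemma hitCount_swap_le (Ti : S → Finset T) {σ : S → T} (hσ : Function.Injective σ) (a b : T) :
    hitCount Ti (⇑(Equiv.swap a b) ∘ σ) ≤ hitCount Ti σ + 2 := by
  classical
  have hsub : (Finset.univ.filter fun i => (⇑(Equiv.swap a b) ∘ σ) i ∈ Ti i) ⊆
      (Finset.univ.filter fun i => σ i ∈ Ti i) ∪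
        (Finset.univ.filter fun i => σ i = a ∨ σ i = b) := by
    intro i hi
    simp only [Finset.mem_filter, Finset.mem_univ, true_and, Finset.mem_union,
      Function.comp_apply] at hi ⊢
    by_cases h1 : σ i = a
    · tauto
    by_cases h2 : σ i = b
    · tauto
    rw [Equiv.swap_apply_of_ne_of_ne h1 h2] at hi; tauto
  have h2 : (Finset.univ.filter fun i => σ i = a ∨ σ i = b).card ≤ 2 := by
    have : (Finset.univ.filter fun i => σ i = a ∨ σ i = b).card ≤
        ({a, b} : Finset T).card := by
      apply Finset.card_le_card_of_injOn σ
      · intro i hi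
        simp only [Finset.mem_coe, Finset.mem_filter] at hi
        simp [hi.2]
      · exact fun x _ y _ h => hσ h
    exact this.trans ((Finset.card_insert_le a {b}).trans (by simp))
  calc hitCount Ti (⇑(Equiv.swap a b) ∘ σ) ≤ _ := Finset.card_le_card hsub
  _ ≤ (Finset.univ.filter fun i => σ i ∈ Ti i).card +
      (Finset.univ.filter fun i => σ i = a ∨ σ i = b).card := Finset.card_union_le _ _
  _ ≤ hitCount Ti σ + 2 := by unfold hitCount; omega

/-- Fiberwise decomposition over the value `σ i`. -/
lemma sum_ite_fiber (Ti : S → Finset T) (i : S) (f : (S → T) → ℝ) :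
    ∑ σ ∈ injFinset S T, (if σ i ∈ Ti i then f σ else 0) =
      ∑ t ∈ Ti i, ∑ σ ∈ (injFinset S T).filter (fun σ => σ i = t), f σ := by
  rw [← Finset.sum_filter]
  rw [← Finset.sum_fiberwise_of_maps_to (g := fun σ : S → T => σ i)
    (fun σ hσ => (Finset.mem_filter.1 hσ).2) f]
  apply Finset.sum_congr rfl
  intro t ht
  apply Finset.sum_congr _ fun _ _ => rfl
  ext σ
  simp only [Finset.mem_filter]
  exact ⟨fun h => ⟨h.1.1, h.2⟩, fun h => ⟨⟨h.1, h.2 ▸ ht⟩, h.2⟩⟩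

/-- counting: `|T| * #{σ : σ i = t} = #Inj`. -/
lemma card_fiber (i : S) (t : T) :
    (Fintype.card T : ℝ) * ((injFinset S T).filter (fun σ => σ i = t)).card =
      ((injFinset S T).card : ℝ) := by
  have := sum_swap_eq (S := S) (T := T) i t (fun _ => (1 : ℝ))
  simpa using this.symm

/-- The mean identity, in multiplied form. -/
lemma mean_identity (Ti : S → Finset T) :
    (Fintype.card T : ℝ) * ∑ σ ∈ injFinset S T, (hitCount Ti σ : ℝ) =
      (∑ i : S, ((Ti i).card : ℝ)) * ((injFinset S T).card : ℝ) := by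
  have hN : ∀ σ : S → T, (hitCount Ti σ : ℝ) =
      ∑ i : S, (if σ i ∈ Ti i then (1 : ℝ) else 0) := by
    intro σ
    rw [hitCount, Finset.card_filter]
    push_cast
    rfl
  calc (Fintype.card T : ℝ) * ∑ σ ∈ injFinset S T, (hitCount Ti σ : ℝ)
      = ∑ i : S, (Fintype.card T : ℝ) *
          ∑ σ ∈ injFinset S T, (if σ i ∈ Ti i then (1 : ℝ) else 0) := by
        rw [← Finset.mul_sum]
        congr 1
        rw [Finset.sum_congr rfl fun σ _ => hN σ, Finset.sum_comm]
    _ = ∑ i : S, ((Ti i).card : ℝ) * ((injFinset S T).card : ℝ) := by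
        refine Finset.sum_congr rfl fun i _ => ?_
        rw [sum_ite_fiber Ti i (fun _ => (1 : ℝ)), Finset.mul_sum]
        have h2 : ∀ t ∈ Ti i, (Fintype.card T : ℝ) *
            ∑ _σ ∈ (injFinset S T).filter (fun σ => σ i = t), (1 : ℝ) =
            ((injFinset S T).card : ℝ) := by
          intro t _
          rw [Finset.sum_const, nsmul_eq_mul, mul_one]
          exact card_fiber i t
        rw [Finset.sum_congr rfl h2, Finset.sum_const, nsmul_eq_mul]
    _ = _ := by rw [← Finset.sum_mul]

open Real in
lemma mgf_core (Ti : S → Finset T) (lam : ℝ) :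
    (Fintype.card T : ℝ) *
        ∑ σ ∈ injFinset S T, (hitCount Ti σ : ℝ) * Real.exp (lam * hitCount Ti σ) =
      ∑ i : S, ∑ t ∈ Ti i, ∑ σ ∈ injFinset S T,
        Real.exp (lam * hitCount Ti (⇑(Equiv.swap t (σ i)) ∘ σ)) := by
  have hN : ∀ σ : S → T, (hitCount Ti σ : ℝ) * Real.exp (lam * hitCount Ti σ) =
      ∑ i : S, (if σ i ∈ Ti i then Real.exp (lam * hitCount Ti σ) else 0) := by
    intro σ
    rw [hitCount, Finset.card_filter, Finset.sum_ite, Finset.sum_const, Finset.sum_const]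
    push_cast
    rw [Finset.sum_ite, Finset.sum_const, Finset.sum_const]
    simp [mul_comm]
  calc (Fintype.card T : ℝ) *
        ∑ σ ∈ injFinset S T, (hitCount Ti σ : ℝ) * Real.exp (lam * hitCount Ti σ)
      = ∑ i : S, (Fintype.card T : ℝ) * ∑ σ ∈ injFinset S T,
          (if σ i ∈ Ti i then Real.exp (lam * hitCount Ti σ) else 0) := by
        rw [← Finset.mul_sum]
        congr 1
        rw [Finset.sum_congr rfl fun σ _ => hN σ, Finset.sum_comm]
    _ = ∑ i : S, (Fintype.card T : ℝ) * ∑ t ∈ Ti i,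
          ∑ σ ∈ (injFinset S T).filter (fun σ => σ i = t),
            Real.exp (lam * hitCount Ti σ) := by
        refine Finset.sum_congr rfl fun i _ => ?_
        rw [sum_ite_fiber Ti i (fun σ => Real.exp (lam * hitCount Ti σ))]
    _ = _ := by
        refine Finset.sum_congr rfl fun i _ => ?_
        rw [Finset.mul_sum]
        refine Finset.sum_congr rfl fun t _ => ?_
        exact (sum_swap_eq i t (fun σ => Real.exp (lam * hitCount Ti σ))).symm

lemma mgf_deriv_le (Ti : S → Finset T) {lam : ℝ} (hlam : 0 ≤ lam) :
    (Fintype.card T : ℝ) *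
        ∑ σ ∈ injFinset S T, (hitCount Ti σ : ℝ) * Real.exp (lam * hitCount Ti σ) ≤
      (∑ i : S, ((Ti i).card : ℝ)) *
        (Real.exp (2 * lam) * ∑ σ ∈ injFinset S T, Real.exp (lam * hitCount Ti σ)) := by
  rw [mgf_core]
  have hrhs : (∑ i : S, ((Ti i).card : ℝ)) *
      (Real.exp (2 * lam) * ∑ σ ∈ injFinset S T, Real.exp (lam * hitCount Ti σ)) =
      ∑ i : S, ∑ _t ∈ Ti i, ∑ σ ∈ injFinset S T,
        Real.exp (2 * lam) * Real.exp (lam * hitCount Ti σ) := by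
    rw [Finset.sum_mul]
    refine Finset.sum_congr rfl fun i _ => ?_
    rw [Finset.sum_const, nsmul_eq_mul, Finset.mul_sum]
  rw [hrhs]
  refine Finset.sum_le_sum fun i _ => Finset.sum_le_sum fun t _ =>
    Finset.sum_le_sum fun σ hσ => ?_
  rw [← Real.exp_add]
  apply Real.exp_le_exp.2
  have hb : (hitCount Ti (⇑(Equiv.swap t (σ i)) ∘ σ) : ℝ) ≤ (hitCount Ti σ : ℝ) + 2 := by
    exact_mod_cast hitCount_swap_le Ti (mem_injFinset.1 hσ) t (σ i)
  nlinarith [mul_le_mul_of_nonneg_left hb hlam]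

lemma mgf_deriv_ge (Ti : S → Finset T) {lam : ℝ} (hlam : lam ≤ 0) :
    (∑ i : S, ((Ti i).card : ℝ)) *
        (Real.exp (2 * lam) * ∑ σ ∈ injFinset S T, Real.exp (lam * hitCount Ti σ)) ≤
      (Fintype.card T : ℝ) *
        ∑ σ ∈ injFinset S T, (hitCount Ti σ : ℝ) * Real.exp (lam * hitCount Ti σ) := by
  rw [mgf_core]
  have hrhs : (∑ i : S, ((Ti i).card : ℝ)) *
      (Real.exp (2 * lam) * ∑ σ ∈ injFinset S T, Real.exp (lam * hitCount Ti σ)) =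
      ∑ i : S, ∑ _t ∈ Ti i, ∑ σ ∈ injFinset S T,
        Real.exp (2 * lam) * Real.exp (lam * hitCount Ti σ) := by
    rw [Finset.sum_mul]
    refine Finset.sum_congr rfl fun i _ => ?_
    rw [Finset.sum_const, nsmul_eq_mul, Finset.mul_sum]
  rw [hrhs]
  refine Finset.sum_le_sum fun i _ => Finset.sum_le_sum fun t _ =>
    Finset.sum_le_sum fun σ hσ => ?_
  rw [← Real.exp_add]
  apply Real.exp_le_exp.2
  have hb : (hitCount Ti (⇑(Equiv.swap t (σ i)) ∘ σ) : ℝ) ≤ (hitCount Ti σ : ℝ) + 2 := by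
    exact_mod_cast hitCount_swap_le Ti (mem_injFinset.1 hσ) t (σ i)
  nlinarith [mul_le_mul_of_nonpos_left hb hlam]

/-- The MGF bound: `m(λ) ≤ |Inj| · exp(μ(e^{2λ}-1)/2)` where `μ = (Σ|Tᵢ|)/|T|`. -/
lemma mgf_le (Ti : S → Finset T) (hT : 0 < Fintype.card T) (lam : ℝ) :
    ∑ σ ∈ injFinset S T, Real.exp (lam * hitCount Ti σ) ≤
      ((injFinset S T).card : ℝ) *
        Real.exp ((∑ i : S, ((Ti i).card : ℝ)) / Fintype.card T *
          (Real.exp (2 * lam) - 1) / 2) := by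
  set μ : ℝ := (∑ i : S, ((Ti i).card : ℝ)) / Fintype.card T with hμdef
  have hμ0 : 0 ≤ μ := by
    apply div_nonneg _ (Nat.cast_nonneg _)
    exact Finset.sum_nonneg fun i _ => Nat.cast_nonneg _
  set m : ℝ → ℝ := fun x => ∑ σ ∈ injFinset S T, Real.exp (x * hitCount Ti σ) with hmdef
  set E : ℝ → ℝ := fun x => Real.exp (-(μ / 2) * Real.exp (2 * x)) with hEdef
  set G : ℝ → ℝ := fun x => m x * E x with hGdef
  have hm : ∀ x : ℝ, HasDerivAt m
      (∑ σ ∈ injFinset S T, (hitCount Ti σ : ℝ) * Real.exp (x * hitCount Ti σ)) x := by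
    intro x
    apply HasDerivAt.fun_sum
    intro σ _
    have h1 : HasDerivAt (fun y : ℝ => y * (hitCount Ti σ : ℝ)) (hitCount Ti σ : ℝ) x := by
      simpa using (hasDerivAt_id x).mul_const (hitCount Ti σ : ℝ)
    simpa [mul_comm] using h1.exp
  have hE : ∀ x : ℝ, HasDerivAt E (E x * (-μ * Real.exp (2 * x))) x := by
    intro x
    have h1 : HasDerivAt (fun y : ℝ => 2 * y) 2 x := by
      simpa using (hasDerivAt_id x).const_mul (2 : ℝ)
    have h2 : HasDerivAt (fun y : ℝ => -(μ / 2) * Real.exp (2 * y))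
        (-(μ / 2) * (Real.exp (2 * x) * 2)) x := (h1.exp).const_mul _
    have h3 := h2.exp
    convert h3 using 1
    rw [hEdef]
    ring
  have hG : ∀ x : ℝ, HasDerivAt G
      ((∑ σ ∈ injFinset S T, (hitCount Ti σ : ℝ) * Real.exp (x * hitCount Ti σ)
        - μ * Real.exp (2 * x) * m x) * E x) x := by
    intro x
    have := (hm x).mul (hE x)
    refine this.congr_deriv ?_
    ring
  have hEpos : ∀ x, 0 < E x := fun x => Real.exp_pos _
  have hT' : (0 : ℝ) < Fintype.card T := by exact_mod_cast hT
  have hTne : (Fintype.card T : ℝ) ≠ 0 := ne_of_gt hT'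
  -- sign of the derivative
  have hsign_le : ∀ x : ℝ, 0 ≤ x →
      (∑ σ ∈ injFinset S T, (hitCount Ti σ : ℝ) * Real.exp (x * hitCount Ti σ)
        - μ * Real.exp (2 * x) * m x) ≤ 0 := by
    intro x hx
    rw [sub_nonpos, ← mul_le_mul_iff_right₀ hT']
    calc (Fintype.card T : ℝ) *
          ∑ σ ∈ injFinset S T, (hitCount Ti σ : ℝ) * Real.exp (x * hitCount Ti σ)
        ≤ (∑ i : S, ((Ti i).card : ℝ)) * (Real.exp (2 * x) * m x) := mgf_deriv_le Ti hx
      _ = (Fintype.card T : ℝ) * (μ * Real.exp (2 * x) * m x) := by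
          rw [hμdef, div_mul_eq_mul_div, div_mul_eq_mul_div, mul_div_cancel₀ _ hTne]; ring
  have hsign_ge : ∀ x : ℝ, x ≤ 0 →
      0 ≤ (∑ σ ∈ injFinset S T, (hitCount Ti σ : ℝ) * Real.exp (x * hitCount Ti σ)
        - μ * Real.exp (2 * x) * m x) := by
    intro x hx
    rw [sub_nonneg, ← mul_le_mul_iff_right₀ hT']
    calc (Fintype.card T : ℝ) * (μ * Real.exp (2 * x) * m x)
        = (∑ i : S, ((Ti i).card : ℝ)) * (Real.exp (2 * x) * m x) := by
          rw [hμdef, div_mul_eq_mul_div, div_mul_eq_mul_div, mul_div_cancel₀ _ hTne]; ring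
      _ ≤ _ := mgf_deriv_ge Ti hx
  -- G is monotone towards 0
  have hGdiff : ∀ x : ℝ, DifferentiableAt ℝ G x := fun x => (hG x).differentiableAt
  have hGle : G lam ≤ G 0 := by
    rcases le_or_gt 0 lam with h0 | h0
    · have hanti : AntitoneOn G (Set.Ici (0 : ℝ)) := by
        apply antitoneOn_of_deriv_nonpos (convex_Ici 0)
          (Continuous.continuousOn (by fun_prop))
          (fun x _ => (hGdiff x).differentiableWithinAt)
        intro x hx
        rw [interior_Ici] at hx
        rw [(hG x).deriv]
        exact mul_nonpos_of_nonpos_of_nonneg (hsign_le x (le_of_lt hx)) (hEpos x).le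
      exact hanti Set.self_mem_Ici h0 h0
    · have hmono : MonotoneOn G (Set.Iic (0 : ℝ)) := by
        apply monotoneOn_of_deriv_nonneg (convex_Iic 0)
          (Continuous.continuousOn (by fun_prop))
          (fun x _ => (hGdiff x).differentiableWithinAt)
        intro x hx
        rw [interior_Iic] at hx
        rw [(hG x).deriv]
        exact mul_nonneg (hsign_ge x (le_of_lt hx)) (hEpos x).le
      exact hmono h0.le Set.self_mem_Iic h0.le
  -- unfold the conclusion
  have hG0 : G 0 = ((injFinset S T).card : ℝ) * Real.exp (-(μ / 2)) := by
    rw [hGdef, hmdef, hEdef]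
    simp
  show m lam ≤ _
  calc m lam = G lam * Real.exp ((μ / 2) * Real.exp (2 * lam)) := by
        rw [hGdef, hEdef, mul_assoc, ← Real.exp_add]; simp
    _ ≤ G 0 * Real.exp ((μ / 2) * Real.exp (2 * lam)) := by
        apply mul_le_mul_of_nonneg_right hGle (Real.exp_pos _).le
    _ = ((injFinset S T).card : ℝ) * Real.exp (μ * (Real.exp (2 * lam) - 1) / 2) := by
        rw [hG0, mul_assoc, ← Real.exp_add]
        congr 2
        ring

lemma chernoff_upper (Ti : S → Finset T) {lam a : ℝ} (hlam : 0 ≤ lam) :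
    (((injFinset S T).filter fun σ => a ≤ (hitCount Ti σ : ℝ)).card : ℝ) *
        Real.exp (lam * a) ≤
      ∑ σ ∈ injFinset S T, Real.exp (lam * hitCount Ti σ) := by
  calc (((injFinset S T).filter fun σ => a ≤ (hitCount Ti σ : ℝ)).card : ℝ) *
        Real.exp (lam * a)
      = ∑ _σ ∈ (injFinset S T).filter fun σ => a ≤ (hitCount Ti σ : ℝ),
          Real.exp (lam * a) := by rw [Finset.sum_const, nsmul_eq_mul]
    _ ≤ ∑ σ ∈ (injFinset S T).filter fun σ => a ≤ (hitCount Ti σ : ℝ),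
          Real.exp (lam * hitCount Ti σ) := by
        refine Finset.sum_le_sum fun σ hσ => Real.exp_le_exp.2 ?_
        exact mul_le_mul_of_nonneg_left (Finset.mem_filter.1 hσ).2 hlam
    _ ≤ _ := Finset.sum_le_sum_of_subset_of_nonneg (Finset.filter_subset _ _)
        fun _ _ _ => (Real.exp_pos _).le

lemma chernoff_lower (Ti : S → Finset T) {lam a : ℝ} (hlam : lam ≤ 0) :
    (((injFinset S T).filter fun σ => (hitCount Ti σ : ℝ) ≤ a).card : ℝ) *
        Real.exp (lam * a) ≤
      ∑ σ ∈ injFinset S T, Real.exp (lam * hitCount Ti σ) := by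
  calc (((injFinset S T).filter fun σ => (hitCount Ti σ : ℝ) ≤ a).card : ℝ) *
        Real.exp (lam * a)
      = ∑ _σ ∈ (injFinset S T).filter fun σ => (hitCount Ti σ : ℝ) ≤ a,
          Real.exp (lam * a) := by rw [Finset.sum_const, nsmul_eq_mul]
    _ ≤ ∑ σ ∈ (injFinset S T).filter fun σ => (hitCount Ti σ : ℝ) ≤ a,
          Real.exp (lam * hitCount Ti σ) := by
        refine Finset.sum_le_sum fun σ hσ => Real.exp_le_exp.2 ?_
        exact mul_le_mul_of_nonpos_left (Finset.mem_filter.1 hσ).2 hlam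
    _ ≤ _ := Finset.sum_le_sum_of_subset_of_nonneg (Finset.filter_subset _ _)
        fun _ _ _ => (Real.exp_pos _).le

lemma log_ineq1 {x : ℝ} (hx : 0 ≤ x) : 2 * x / (2 + x) ≤ Real.log (1 + x) := by
  set F : ℝ → ℝ := fun y => Real.log (1 + y) - 2 * y / (2 + y) with hF
  have hder : ∀ y : ℝ, 0 < y → HasDerivAt F (1 / (1 + y) - 4 / (2 + y) ^ 2) y := by
    intro y hy
    have h1 : HasDerivAt (fun y : ℝ => Real.log (1 + y)) (1 / (1 + y)) y := by
      have := ((hasDerivAt_id y).const_add (1 : ℝ)).log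
        (by intro h; simp only [id_eq] at h; linarith)
      simpa [one_div] using this
    have h2 : HasDerivAt (fun y : ℝ => 2 * y / (2 + y)) (4 / (2 + y) ^ 2) y := by
      have ha : HasDerivAt (fun y : ℝ => 2 * y) 2 y := by
        simpa using (hasDerivAt_id y).const_mul (2 : ℝ)
      have hb : HasDerivAt (fun y : ℝ => 2 + y) 1 y := by
        simpa using (hasDerivAt_id y).const_add (2 : ℝ)
      have := ha.div hb (by linarith)
      refine this.congr_deriv ?_
      field_simp
      ring
    exact h1.sub h2
  have hmono : MonotoneOn F (Set.Ici (0 : ℝ)) := by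
    apply monotoneOn_of_deriv_nonneg (convex_Ici 0)
    · apply ContinuousOn.sub
      · apply ContinuousOn.log
        · fun_prop
        · intro y hy; simp only [Set.mem_Ici] at hy; intro h; linarith
      · apply ContinuousOn.div
        · fun_prop
        · fun_prop
        · intro y hy; simp only [Set.mem_Ici] at hy; intro h; linarith
    · intro y hy
      rw [interior_Ici] at hy
      exact ((hder y hy).differentiableAt).differentiableWithinAt
    · intro y hy
      rw [interior_Ici] at hy
      rw [Set.mem_Ioi] at hy
      rw [(hder y hy).deriv]
      have heq : 1 / (1 + y) - 4 / (2 + y) ^ 2 = y ^ 2 / ((1 + y) * (2 + y) ^ 2) := by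
        field_simp
        ring
      rw [heq]
      positivity
  have h0 : F 0 = 0 := by simp [hF]
  have := hmono (Set.mem_Ici.2 le_rfl) (Set.mem_Ici.2 hx) hx
  rw [h0, hF] at this
  simp only at this
  linarith

lemma log_ineq2 {u : ℝ} (h0 : 0 < u) (h1 : u ≤ 1) : (u - 1 / u) / 2 ≤ Real.log u := by
  set F : ℝ → ℝ := fun y => Real.log y - (y - 1 / y) / 2 with hF
  have hder : ∀ y : ℝ, 0 < y → HasDerivAt F (1 / y - (1 + 1 / y ^ 2) / 2) y := by
    intro y hy
    have h1' : HasDerivAt Real.log (1 / y) y := by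
      simpa [one_div] using Real.hasDerivAt_log (ne_of_gt hy)
    have h2 : HasDerivAt (fun y : ℝ => (y - 1 / y) / 2) ((1 + 1 / y ^ 2) / 2) y := by
      have hb : HasDerivAt (fun y : ℝ => 1 / y) (-(y ^ 2)⁻¹) y := by
        simpa [one_div] using hasDerivAt_inv (ne_of_gt hy)
      have := ((hasDerivAt_id y).sub hb).div_const 2
      refine this.congr_deriv ?_
      rw [one_div]
      ring
    exact h1'.sub h2
  have hanti : AntitoneOn F (Set.Ioi (0 : ℝ)) := by
    apply antitoneOn_of_deriv_nonpos (convex_Ioi 0)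
    · apply ContinuousOn.sub
      · exact Real.continuousOn_log.mono (by intro y hy; simp at hy ⊢; linarith)
      · apply ContinuousOn.div_const
        apply ContinuousOn.sub continuousOn_id
        apply ContinuousOn.div continuousOn_const continuousOn_id
        intro y hy; simp only [Set.mem_Ioi] at hy; exact ne_of_gt hy
    · intro y hy
      rw [interior_Ioi] at hy
      exact ((hder y hy).differentiableAt).differentiableWithinAt
    · intro y hy
      rw [interior_Ioi] at hy
      rw [Set.mem_Ioi] at hy
      rw [(hder y hy).deriv]
      have heq : 1 / y - (1 + 1 / y ^ 2) / 2 = -((y - 1) ^ 2) / (2 * y ^ 2) := by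
        field_simp
        ring
      rw [heq]
      apply div_nonpos_of_nonpos_of_nonneg (by nlinarith [sq_nonneg (y - 1)]) (by positivity)
  have hF1 : F 1 = 0 := by simp [hF]
  have := hanti (Set.mem_Ioi.2 h0) (Set.mem_Ioi.2 one_pos) h1
  rw [hF1, hF] at this
  simp only at this
  linarith

lemma scalar_upper {d mu L : ℝ} (hd : 0 < d) (hmu : 0 ≤ mu) (hL : 2 * d ≤ L * (2 + d)) :
    mu * (1 + d - 1) / 2 - L / 2 * ((1 + d) * mu) ≤ -(d ^ 2 / (4 + 2 * d)) * mu := by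
  have htgt : -(d ^ 2 / (4 + 2 * d)) * mu = -(d ^ 2 * mu) / (4 + 2 * d) := by ring
  rw [htgt, le_div_iff₀ (by linarith : (0 : ℝ) < 4 + 2 * d)]
  nlinarith [mul_le_mul_of_nonneg_right hL (mul_nonneg hmu (by linarith : (0 : ℝ) ≤ 1 + d))]

lemma scalar_lower {d mu L : ℝ} (hd : 0 < d) (hd1 : d < 1) (hmu : 0 ≤ mu)
    (hL : ((1 - d) ^ 2 - 1) / 2 ≤ (1 - d) * L) :
    mu * (1 - d - 1) / 2 - L / 2 * ((1 - d) * mu) ≤ -(d ^ 2 / 4) * mu := by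
  nlinarith [mul_le_mul_of_nonneg_right hL hmu]

lemma upper_tail (Ti : S → Finset T) (hT : 0 < Fintype.card T) {δ : ℝ} (hδ : 0 < δ) :
    (((injFinset S T).filter fun σ =>
        (1 + δ) * ((∑ i : S, ((Ti i).card : ℝ)) / Fintype.card T) ≤
          (hitCount Ti σ : ℝ)).card : ℝ) ≤
      ((injFinset S T).card : ℝ) * Real.exp (-(δ ^ 2 / (4 + 2 * δ)) *
        ((∑ i : S, ((Ti i).card : ℝ)) / Fintype.card T)) := by
  set μ : ℝ := (∑ i : S, ((Ti i).card : ℝ)) / Fintype.card T with hμdef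
  have hμ0 : 0 ≤ μ := div_nonneg (Finset.sum_nonneg fun i _ => Nat.cast_nonneg _)
    (Nat.cast_nonneg _)
  set lam : ℝ := Real.log (1 + δ) / 2 with hlamdef
  have hlam : 0 ≤ lam := div_nonneg (Real.log_nonneg (by linarith)) (by norm_num)
  have hexp : Real.exp (2 * lam) = 1 + δ := by
    rw [hlamdef, mul_div_cancel₀ _ (by norm_num : (2 : ℝ) ≠ 0)]
    exact Real.exp_log (by linarith)
  have h1 := (chernoff_upper Ti (a := (1 + δ) * μ) hlam).trans (mgf_le Ti hT lam)
  rw [← le_div_iff₀ (Real.exp_pos _), mul_div_assoc, ← Real.exp_sub] at h1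
  refine h1.trans ?_
  apply mul_le_mul_of_nonneg_left _ (Nat.cast_nonneg _)
  apply Real.exp_le_exp.2
  rw [hexp, hlamdef]
  have hL : 2 * δ / (2 + δ) ≤ Real.log (1 + δ) := log_ineq1 hδ.le
  rw [div_le_iff₀ (by linarith : (0 : ℝ) < 2 + δ)] at hL
  exact scalar_upper hδ hμ0 hL

lemma lower_tail_small (Ti : S → Finset T) (hT : 0 < Fintype.card T) {δ : ℝ}
    (hδ : 0 < δ) (hδ1 : δ < 1) :
    (((injFinset S T).filter fun σ =>
        (hitCount Ti σ : ℝ) ≤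
          (1 - δ) * ((∑ i : S, ((Ti i).card : ℝ)) / Fintype.card T)).card : ℝ) ≤
      ((injFinset S T).card : ℝ) * Real.exp (-(δ ^ 2 / 4) *
        ((∑ i : S, ((Ti i).card : ℝ)) / Fintype.card T)) := by
  set μ : ℝ := (∑ i : S, ((Ti i).card : ℝ)) / Fintype.card T with hμdef
  have hμ0 : 0 ≤ μ := div_nonneg (Finset.sum_nonneg fun i _ => Nat.cast_nonneg _)
    (Nat.cast_nonneg _)
  have hu0 : (0 : ℝ) < 1 - δ := by linarith
  set lam : ℝ := Real.log (1 - δ) / 2 with hlamdef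
  have hlam : lam ≤ 0 :=
    div_nonpos_of_nonpos_of_nonneg (Real.log_nonpos (by linarith) (by linarith)) (by norm_num)
  have hexp : Real.exp (2 * lam) = 1 - δ := by
    rw [hlamdef, mul_div_cancel₀ _ (by norm_num : (2 : ℝ) ≠ 0)]
    exact Real.exp_log hu0
  have h1 := (chernoff_lower Ti (a := (1 - δ) * μ) hlam).trans (mgf_le Ti hT lam)
  rw [← le_div_iff₀ (Real.exp_pos _), mul_div_assoc, ← Real.exp_sub] at h1
  refine h1.trans ?_
  apply mul_le_mul_of_nonneg_left _ (Nat.cast_nonneg _)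
  apply Real.exp_le_exp.2
  rw [hexp, hlamdef]
  have hL : ((1 - δ) - 1 / (1 - δ)) / 2 ≤ Real.log (1 - δ) := log_ineq2 hu0 (by linarith)
  have hL2 : ((1 - δ) ^ 2 - 1) / 2 ≤ (1 - δ) * Real.log (1 - δ) := by
    calc ((1 - δ) ^ 2 - 1) / 2 = (1 - δ) * (((1 - δ) - 1 / (1 - δ)) / 2) := by
          field_simp
      _ ≤ (1 - δ) * Real.log (1 - δ) := mul_le_mul_of_nonneg_left hL hu0.le
  exact scalar_lower hδ hδ1 hμ0 hL2

lemma lower_tail (Ti : S → Finset T) (hT : 0 < Fintype.card T) {δ : ℝ} (hδ : 0 < δ) :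
    (((injFinset S T).filter fun σ =>
        (hitCount Ti σ : ℝ) ≤
          (1 - δ) * ((∑ i : S, ((Ti i).card : ℝ)) / Fintype.card T)).card : ℝ) ≤
      ((injFinset S T).card : ℝ) * Real.exp (-(δ ^ 2 / (4 + 2 * δ)) *
        ((∑ i : S, ((Ti i).card : ℝ)) / Fintype.card T)) := by
  set μ : ℝ := (∑ i : S, ((Ti i).card : ℝ)) / Fintype.card T with hμdef
  have hμ0 : 0 ≤ μ := div_nonneg (Finset.sum_nonneg fun i _ => Nat.cast_nonneg _)
    (Nat.cast_nonneg _)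
  have hmono : ∀ {c c' : ℝ}, c ≤ c' →
      ((injFinset S T).card : ℝ) * Real.exp (c * μ) ≤
        ((injFinset S T).card : ℝ) * Real.exp (c' * μ) := by
    intro c c' hcc
    apply mul_le_mul_of_nonneg_left _ (Nat.cast_nonneg _)
    exact Real.exp_le_exp.2 (mul_le_mul_of_nonneg_right hcc hμ0)
  rcases eq_or_lt_of_le hμ0 with hμz | hμpos
  · -- μ = 0 : trivial bound
    rw [← hμz]
    simp only [mul_zero, Real.exp_zero, mul_one]
    exact_mod_cast Finset.card_le_card (Finset.filter_subset _ _)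
  rcases lt_trichotomy δ 1 with hδ1 | hδ1 | hδ1
  · refine (lower_tail_small Ti hT hδ hδ1).trans (hmono ?_)
    rw [neg_le_neg_iff]
    apply div_le_div_of_nonneg_left (by positivity) (by norm_num) (by linarith)
  · -- δ = 1 : use the δ' = 9/10 bound
    subst hδ1
    have hsub : ((injFinset S T).filter fun σ =>
        (hitCount Ti σ : ℝ) ≤ (1 - 1) * μ) ⊆
        (injFinset S T).filter fun σ =>
          (hitCount Ti σ : ℝ) ≤ (1 - 9/10) * μ := by
      intro σ hσ
      rw [Finset.mem_filter] at hσ ⊢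
      refine ⟨hσ.1, hσ.2.trans ?_⟩
      nlinarith
    refine (Nat.cast_le.2 (Finset.card_le_card hsub) :
        ((((injFinset S T).filter fun σ => (hitCount Ti σ : ℝ) ≤ (1 - 1) * μ).card : ℕ) : ℝ) ≤ _).trans ?_
    refine (lower_tail_small Ti hT (by norm_num) (by norm_num)).trans (hmono ?_)
    norm_num
  · -- δ > 1 : the event is empty
    have hempty : ((injFinset S T).filter fun σ =>
        (hitCount Ti σ : ℝ) ≤ (1 - δ) * μ) = ∅ := by
      apply Finset.filter_false_of_mem
      intro σ _
      push_neg
      calc (1 - δ) * μ < 0 := by nlinarith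
        _ ≤ _ := Nat.cast_nonneg _
    rw [hempty]
    simp only [Finset.card_empty, Nat.cast_zero]
    positivity

lemma two_sided (Ti : S → Finset T) {δ μ : ℝ} (hδ : 0 < δ)
    (hμ : μ = (∑ i : S, ((Ti i).card : ℝ)) / Fintype.card T) :
    (((injFinset S T).filter fun σ =>
        δ * μ ≤ |(hitCount Ti σ : ℝ) - μ|).card : ℝ) ≤
      2 * Real.exp (-(δ ^ 2 / (4 + 2 * δ)) * μ) * ((injFinset S T).card : ℝ) := by
  have hμ0 : 0 ≤ μ := hμ ▸ div_nonneg
    (Finset.sum_nonneg fun i _ => Nat.cast_nonneg _) (Nat.cast_nonneg _)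
  rcases eq_or_lt_of_le hμ0 with hμz | hμpos
  · -- μ = 0 : trivial since the probability is at most 1 and the bound is 2
    rw [← hμz]
    simp only [mul_zero, Real.exp_zero, mul_one]
    refine (Nat.cast_le.2 (Finset.card_le_card (Finset.filter_subset _ _)) :
        _ ≤ ((injFinset S T).card : ℝ)).trans ?_
    have := Nat.cast_nonneg (α := ℝ) (injFinset S T).card
    linarith
  · have hT : 0 < Fintype.card T := by
      rcases Nat.eq_zero_or_pos (Fintype.card T) with h | h
      · exfalso
        rw [h] at hμ
        simp at hμ
        rw [hμ] at hμpos
        exact lt_irrefl _ hμpos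
      · exact h
    have hsub : ((injFinset S T).filter fun σ =>
        δ * μ ≤ |(hitCount Ti σ : ℝ) - μ|) ⊆
        (((injFinset S T).filter fun σ =>
            (1 + δ) * ((∑ i : S, ((Ti i).card : ℝ)) / Fintype.card T) ≤ (hitCount Ti σ : ℝ)) ∪
          ((injFinset S T).filter fun σ =>
            (hitCount Ti σ : ℝ) ≤ (1 - δ) * ((∑ i : S, ((Ti i).card : ℝ)) / Fintype.card T))) := by
      intro σ hσ
      rw [Finset.mem_filter] at hσ
      rw [Finset.mem_union, Finset.mem_filter, Finset.mem_filter]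
      rcases le_abs.1 hσ.2 with h | h
      · left; exact ⟨hσ.1, by rw [← hμ]; linarith⟩
      · right; exact ⟨hσ.1, by rw [← hμ]; linarith⟩
    calc (((injFinset S T).filter fun σ => δ * μ ≤ |(hitCount Ti σ : ℝ) - μ|).card : ℝ)
        ≤ ((((injFinset S T).filter fun σ =>
            (1 + δ) * ((∑ i : S, ((Ti i).card : ℝ)) / Fintype.card T) ≤ (hitCount Ti σ : ℝ)) ∪
          ((injFinset S T).filter fun σ =>
            (hitCount Ti σ : ℝ) ≤ (1 - δ) * ((∑ i : S, ((Ti i).card : ℝ)) / Fintype.card T))).card : ℝ) := by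
          exact_mod_cast Nat.cast_le.2 (Finset.card_le_card hsub)
      _ ≤ (((injFinset S T).filter fun σ =>
            (1 + δ) * ((∑ i : S, ((Ti i).card : ℝ)) / Fintype.card T) ≤ (hitCount Ti σ : ℝ)).card : ℝ) +
          (((injFinset S T).filter fun σ =>
            (hitCount Ti σ : ℝ) ≤ (1 - δ) * ((∑ i : S, ((Ti i).card : ℝ)) / Fintype.card T)).card : ℝ) := by
          exact_mod_cast Nat.cast_le.2 (Finset.card_union_le _ _)
      _ ≤ ((injFinset S T).card : ℝ) * Real.exp (-(δ ^ 2 / (4 + 2 * δ)) *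
              ((∑ i : S, ((Ti i).card : ℝ)) / Fintype.card T)) +
          ((injFinset S T).card : ℝ) * Real.exp (-(δ ^ 2 / (4 + 2 * δ)) *
              ((∑ i : S, ((Ti i).card : ℝ)) / Fintype.card T)) :=
          add_le_add (upper_tail Ti hT hδ) (lower_tail Ti hT hδ)
      _ = 2 * Real.exp (-(δ ^ 2 / (4 + 2 * δ)) * μ) * ((injFinset S T).card : ℝ) := by
          rw [← hμ]; ring

lemma hitCount_inter {σ : S → T} (hσ : Function.Injective σ) (T₀ : Finset T) :
    hitCount (fun _ => T₀) σ = ((Finset.image σ Finset.univ) ∩ T₀).card := by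
  rw [hitCount, ← Finset.card_image_of_injective
    (Finset.univ.filter fun i => σ i ∈ T₀) hσ]
  congr 1
  ext t
  simp only [Finset.mem_image, Finset.mem_filter, Finset.mem_univ, true_and,
    Finset.mem_inter]
  constructor
  · rintro ⟨i, hi, rfl⟩
    exact ⟨⟨i, rfl⟩, hi⟩
  · rintro ⟨⟨i, rfl⟩, ht⟩
    exact ⟨i, ht, rfl⟩

lemma card_image_fiber {U : Finset T} (hU : U.card = Fintype.card S) :
    ((injFinset S T).filter fun σ => Finset.image σ Finset.univ = U).card =
      (Fintype.card S).factorial := by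
  have hbij : ((injFinset S T).filter fun σ => Finset.image σ Finset.univ = U).card
      = Fintype.card (S ↪ {x // x ∈ U}) := by
    rw [← Finset.card_univ]
    apply Finset.card_bij (fun σ hσ =>
      (⟨fun k => (⟨σ k, by
          have h2 := (Finset.mem_filter.1 hσ).2
          rw [← h2]
          exact Finset.mem_image_of_mem σ (Finset.mem_univ k)⟩ : {x // x ∈ U}), by
        intro a b hab
        exact mem_injFinset.1 (Finset.mem_filter.1 hσ).1 (congrArg Subtype.val hab)⟩ : S ↪ {x // x ∈ U}))
    · intro σ hσ; exact Finset.mem_univ _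
    · intro σ1 h1 σ2 h2 heq
      funext k
      have := congrFun (congrArg (fun (e : S ↪ {x // x ∈ U}) => (e : S → {x // x ∈ U})) heq) k
      exact congrArg Subtype.val this
    · intro e _
      have hinj : Function.Injective (fun k : S => ((e k : {x // x ∈ U}) : T)) :=
        fun a b hab => e.injective (Subtype.ext hab)
      refine ⟨fun k => ((e k : {x // x ∈ U}) : T), ?_, ?_⟩
      · rw [Finset.mem_filter]
        constructor
        · exact mem_injFinset.2 hinj
        · apply Finset.eq_of_subset_of_card_le
          · intro t ht
            obtain ⟨k, _, rfl⟩ := Finset.mem_image.1 ht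
            exact (e k).2
          · rw [Finset.card_image_of_injective _ hinj, Finset.card_univ, hU]
      · apply DFunLike.ext
        intro k
        exact Subtype.ext rfl
  rw [hbij, Fintype.card_embedding_eq, Fintype.card_coe, hU, Nat.descFactorial_self]

lemma double_count (Q : Finset T → Prop) [DecidablePred Q] :
    ((injFinset S T).filter fun σ => Q (Finset.image σ Finset.univ)).card =
      (Finset.univ.filter fun U : Finset T =>
          U.card = Fintype.card S ∧ Q U).card * (Fintype.card S).factorial := by
  rw [Finset.card_eq_sum_card_fiberwise (f := fun σ => Finset.image σ Finset.univ)
    (t := Finset.univ.filter fun U : Finset T => U.card = Fintype.card S ∧ Q U) ?_]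
  · rw [Finset.sum_congr rfl (g := fun _ => (Fintype.card S).factorial)
      (fun U hU => ?_), Finset.sum_const, smul_eq_mul]
    have hU' := (Finset.mem_filter.1 hU).2
    rw [Finset.filter_filter]
    have hpred : ∀ σ : S → T, (Q (Finset.image σ Finset.univ) ∧
        Finset.image σ Finset.univ = U) ↔ Finset.image σ Finset.univ = U :=
      fun σ => ⟨And.right, fun h => ⟨h ▸ hU'.2, h⟩⟩
    rw [Finset.filter_congr (fun σ _ => hpred σ), card_image_fiber hU'.1]
  · intro σ hσ
    simp only [Finset.mem_coe, Finset.mem_filter] at hσ ⊢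
    refine ⟨Finset.mem_univ _, ?_, hσ.2⟩
    rw [Finset.card_image_of_injective _ (mem_injFinset.1 hσ.1), Finset.card_univ]

end RIC

open RIC in
/-- **Concentration for Hoeffding-type statistics of a random injection** (Lemma 5.4):
for a uniform random injection `σ : S → T` and fixed sets `T_i ⊆ T`, the statistic
`N_σ = #{i : σ(i) ∈ T_i}` has mean `(1/|T|) Σ_i |T_i|` and Bernstein-type concentration;
in particular, for a uniform random `m`-element subset `U ⊆ T` and fixed `T₀ ⊆ T`,
`|U ∩ T₀|` concentrates around `m|T₀|/|T|`.  (All probabilities are expressed as ratios of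
cardinalities under the uniform distribution.) -/
theorem random_injection_concentration {S T : Type*} [Fintype S] [Fintype T]
    [DecidableEq S] [DecidableEq T]
    (hST : Fintype.card S ≤ Fintype.card T) (Ti : S → Finset T) (T₀ : Finset T) :
    -- the mean of `N_σ` under the uniform distribution on injections:
    ((∑ σ ∈ injFinset S T, (hitCount Ti σ : ℝ)) / (injFinset S T).card =
        (∑ i : S, ((Ti i).card : ℝ)) / Fintype.card T) ∧
    -- Bernstein-type tail bound for `N_σ`:
    (∀ δ : ℝ, 0 < δ →
      (({σ ∈ (injFinset S T : Set (S → T)) |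
          δ * ((∑ i : S, ((Ti i).card : ℝ)) / Fintype.card T) ≤
            |(hitCount Ti σ : ℝ) - (∑ i : S, ((Ti i).card : ℝ)) / Fintype.card T|} :
          Set (S → T)).ncard : ℝ) / (injFinset S T).card ≤
        2 * Real.exp (-(δ ^ 2 / (4 + 2 * δ)) *
          ((∑ i : S, ((Ti i).card : ℝ)) / Fintype.card T))) ∧
    -- the uniform random subset version:
    (∀ δ : ℝ, 0 < δ →
      (({U : Finset T | U.card = Fintype.card S ∧
          δ * ((Fintype.card S : ℝ) * T₀.card / Fintype.card T) ≤
            |((U ∩ T₀).card : ℝ) - (Fintype.card S : ℝ) * T₀.card / Fintype.card T|} :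
          Set (Finset T)).ncard : ℝ) /
          (({U : Finset T | U.card = Fintype.card S} : Set (Finset T)).ncard : ℝ) ≤
        2 * Real.exp (-(δ ^ 2 / (4 + 2 * δ)) *
          ((Fintype.card S : ℝ) * T₀.card / Fintype.card T))) := by

  classical
  have hn : 0 < ((injFinset S T).card : ℝ) := by
    exact_mod_cast Finset.card_pos.2 (injFinset_nonempty hST)
  refine ⟨?_, ?_, ?_⟩
  · -- the mean
    rcases Nat.eq_zero_or_pos (Fintype.card T) with hT | hT
    · have hS : Fintype.card S = 0 := le_antisymm (hT ▸ hST) (Nat.zero_le _)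
      haveI : IsEmpty S := Fintype.card_eq_zero_iff.mp hS
      have h1 : ∀ σ : S → T, hitCount Ti σ = 0 := by
        intro σ; rw [hitCount]; simp [Finset.univ_eq_empty]
      rw [hT]
      simp [h1, Finset.univ_eq_empty]
    · have hT' : (0 : ℝ) < Fintype.card T := by exact_mod_cast hT
      rw [div_eq_div_iff hn.ne' hT'.ne']
      rw [mul_comm]
      exact mean_identity Ti
  · -- concentration for injections
    intro δ hδ
    have hset : ({σ ∈ (injFinset S T : Set (S → T)) |
        δ * ((∑ i : S, ((Ti i).card : ℝ)) / Fintype.card T) ≤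
          |(hitCount Ti σ : ℝ) - (∑ i : S, ((Ti i).card : ℝ)) / Fintype.card T|} :
        Set (S → T)) = ↑((injFinset S T).filter fun σ =>
          δ * ((∑ i : S, ((Ti i).card : ℝ)) / Fintype.card T) ≤
            |(hitCount Ti σ : ℝ) - (∑ i : S, ((Ti i).card : ℝ)) / Fintype.card T|) := by
      ext σ
      simp [Set.mem_setOf_eq]
    rw [hset, Set.ncard_coe_finset, div_le_iff₀ hn]
    exact two_sided Ti hδ rfl
  · -- concentration for random subsets
    intro δ hδ
    set μ : ℝ := (Fintype.card S : ℝ) * T₀.card / Fintype.card T with hμdef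
    have hfact : (0 : ℝ) < (Fintype.card S).factorial := by
      exact_mod_cast Nat.factorial_pos _
    obtain ⟨U₀, _, hU₀card⟩ := Finset.exists_subset_card_eq (s := (Finset.univ : Finset T))
      (n := Fintype.card S) (by rw [Finset.card_univ]; exact hST)
    have haU : 0 < ((Finset.univ.filter fun U : Finset T =>
        U.card = Fintype.card S).card : ℝ) := by
      exact_mod_cast Finset.card_pos.2
        ⟨U₀, Finset.mem_filter.2 ⟨Finset.mem_univ _, hU₀card⟩⟩
    have hs1 : ({U : Finset T | U.card = Fintype.card S ∧
        δ * μ ≤ |((U ∩ T₀).card : ℝ) - μ|} : Set (Finset T)).ncard =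
        ((Finset.univ.filter fun U : Finset T => U.card = Fintype.card S ∧
          δ * μ ≤ |((U ∩ T₀).card : ℝ) - μ|).card) := by
      rw [← Set.ncard_coe_finset]
      congr 1
      ext U
      simp [Set.mem_setOf_eq]
    have hs2 : ({U : Finset T | U.card = Fintype.card S} : Set (Finset T)).ncard =
        ((Finset.univ.filter fun U : Finset T => U.card = Fintype.card S).card) := by
      rw [← Set.ncard_coe_finset]
      congr 1
      ext U
      simp [Set.mem_setOf_eq]
    rw [hs1, hs2, div_le_iff₀ haU]
    -- double counting
    have hall := double_count (S := S) (T := T) (Q := fun _ : Finset T => True)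
    rw [Finset.filter_true_of_mem (fun _ _ => trivial)] at hall
    simp only [and_true] at hall
    have hev := double_count (S := S) (T := T)
      (Q := fun U : Finset T => δ * μ ≤ |((U ∩ T₀).card : ℝ) - μ|)
    have hevent : ((injFinset S T).filter fun σ =>
        δ * μ ≤ |((Finset.image σ Finset.univ ∩ T₀).card : ℝ) - μ|) =
        ((injFinset S T).filter fun σ =>
          δ * μ ≤ |(hitCount (fun _ => T₀) σ : ℝ) - μ|) := by
      apply Finset.filter_congr
      intro σ hσ
      rw [hitCount_inter (mem_injFinset.1 hσ) T₀]
    have hμeq : μ = (∑ i : S, (((fun _ : S => T₀) i).card : ℝ)) / Fintype.card T := by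
      rw [hμdef]
      congr 1
      rw [Finset.sum_const, Finset.card_univ, nsmul_eq_mul]
    have hbound := two_sided (S := S) (fun _ => T₀) hδ hμeq
    rw [← hevent, hev, hall] at hbound
    push_cast at hbound
    have h2 : ((Finset.univ.filter fun U : Finset T => U.card = Fintype.card S ∧
          δ * μ ≤ |((U ∩ T₀).card : ℝ) - μ|).card : ℝ) * (Fintype.card S).factorial ≤
        (2 * Real.exp (-(δ ^ 2 / (4 + 2 * δ)) * μ) *
          ((Finset.univ.filter fun U : Finset T =>
            U.card = Fintype.card S).card : ℝ)) * (Fintype.card S).factorial := by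
      calc _ ≤ _ := hbound
        _ = _ := by ring
    exact le_of_mul_le_mul_right h2 hfact


end
end
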